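/- arXiv:2012.11054 — 10 statements merged into one kernel-verified Lean document; each statement's English description precedes it below -/
import Mathlib

section
/- Let T be a conformal Killing-Yano (CKY) tensor on a metric Lie algebra (g, ⟨·,·⟩) with associated 1-form θ and dual vector ξ (i.e., θ(x) = ⟨ξ, x⟩). Then T ξ = 0. -/
open scoped RealInnerProductSpace

/-- If `T` is a CKY tensor on a metric Lie algebra with associated
1-form `θ = ⟪ξ, ·⟫`, then `T ξ = 0`. -/
theorem cky_tensor_vanishes_on_dual_vector
    {V : Type*} [NormedAddCommGroup V] [InnerProductSpace ℝ V] [FiniteDimensional ℝ V]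
    (lb : V →ₗ[ℝ] V →ₗ[ℝ] V)
    (hanti : ∀ u : V, lb u u = 0)
    (hjac : ∀ u v w : V, lb u (lb v w) + lb v (lb w u) + lb w (lb u v) = 0)
    (D : V →ₗ[ℝ] V →ₗ[ℝ] V)
    (hD : ∀ u v w : V, 2 * ⟪D u v, w⟫ = ⟪lb u v, w⟫ - ⟪lb v w, u⟫ + ⟪lb w u, v⟫)
    (T : V →ₗ[ℝ] V)
    (hTskew : ∀ u v : V, ⟪T u, v⟫ = -⟪u, T v⟫)
    (ξ : V)
    (hCKY : ∀ u v w : V,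
      ⟪D u (T v) - T (D u v), w⟫ + ⟪D v (T u) - T (D v u), w⟫
        = 2 * ⟪u, v⟫ * ⟪ξ, w⟫ - ⟪v, w⟫ * ⟪ξ, u⟫ - ⟪u, w⟫ * ⟪ξ, v⟫) :
    T ξ = 0 := by
  classical
  -- antisymmetry of the bracket
  have hswap : ∀ u v : V, lb v u = - lb u v := by
    intro u v
    have h := hanti (u + v)
    rw [map_add] at h
    simp only [LinearMap.add_apply, map_add, hanti, zero_add, add_zero] at h
    exact eq_neg_of_add_eq_zero_left h
  -- key algebraic identity: if x is an eigenvector of T ∘ T, then ⟪x,x⟫ * ⟪ξ, T x⟫ = 0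
  have key : ∀ (x : V) (μ : ℝ), T (T x) = μ • x → ⟪x, x⟫ * ⟪ξ, T x⟫ = 0 := by
    intro x μ hx
    have h0 : ⟪x, T x⟫ = 0 := by
      have h1 := hTskew x x
      have h2 := real_inner_comm (T x) x
      linarith
    have hA1 : ⟪D x (T x), T x⟫ = 0 := by
      have hd := hD x (T x) (T x)
      rw [hanti (T x), hswap x (T x)] at hd
      simp only [inner_zero_left, inner_neg_left] at hd
      linarith
    have hA2 : ⟪D x x, x⟫ = 0 := by
      have hd := hD x x x
      rw [hanti x] at hd
      simp only [inner_zero_left] at hd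
      linarith
    have hA3 : ⟪T (D x x), T x⟫ = 0 := by
      have h1 := hTskew (D x x) (T x)
      rw [hx, real_inner_smul_right, hA2] at h1
      simpa using h1
    have main := hCKY x x (T x)
    rw [inner_sub_left, hA1, hA3, h0] at main
    linarith
  -- T ∘ T is symmetric
  have hS : (T ∘ₗ T).IsSymmetric := by
    intro u v
    have h1 := hTskew (T u) v
    have h2 := hTskew u (T v)
    simp only [LinearMap.comp_apply]
    linarith
  -- spectral theorem
  let b := hS.eigenvectorBasis rfl
  have hb : ∀ i, ⟪ξ, T (b i)⟫ = 0 := by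
    intro i
    have hx := hS.apply_eigenvectorBasis rfl i
    have hx' : T (T (b i)) = hS.eigenvalues rfl i • b i := by
      simpa [LinearMap.comp_apply] using hx
    have hk := key (b i) _ hx'
    have hn1 : ⟪b i, b i⟫ = (1 : ℝ) := by
      have hni := b.orthonormal.1 i
      rw [real_inner_self_eq_norm_mul_norm, hni]
      norm_num
    rw [hn1, one_mul] at hk
    exact hk
  have hz : ∀ i, ⟪b i, T ξ⟫ = 0 := by
    intro i
    have h1 := hTskew ξ (b i)
    rw [real_inner_comm, h1, hb i, neg_zero]
  have hrepr : b.repr (T ξ) = 0 := by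
    ext i
    simp [OrthonormalBasis.repr_apply_apply, hz i]
  exact b.repr.map_eq_zero_iff.mp hrepr
end

section
/- Let T be a CKY tensor on a metric Lie algebra (g, ⟨·,·⟩) with associated dual vector ξ ≠ 0. Then the subspace ξ^⊥ is invariant under the adjoint operator ad_ξ, i.e., [ξ, x] ∈ ξ^⊥ for all x ∈ ξ^⊥. -/
open scoped RealInnerProductSpace

/-- If `T` is a CKY tensor with nonzero dual vector `ξ`, then `ξ^⊥`
is invariant under `ad_ξ`, i.e. `[ξ, x] ⊥ ξ` whenever `x ⊥ ξ`. -/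
theorem cky_ad_xi_preserves_xi_perp
    {V : Type*} [NormedAddCommGroup V] [InnerProductSpace ℝ V] [FiniteDimensional ℝ V]
    (lb : V →ₗ[ℝ] V →ₗ[ℝ] V)
    (hanti : ∀ u : V, lb u u = 0)
    (hjac : ∀ u v w : V, lb u (lb v w) + lb v (lb w u) + lb w (lb u v) = 0)
    (D : V →ₗ[ℝ] V →ₗ[ℝ] V)
    (hD : ∀ u v w : V, 2 * ⟪D u v, w⟫ = ⟪lb u v, w⟫ - ⟪lb v w, u⟫ + ⟪lb w u, v⟫)
    (T : V →ₗ[ℝ] V)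
    (hTskew : ∀ u v : V, ⟪T u, v⟫ = -⟪u, T v⟫)
    (ξ : V) (hξ : ξ ≠ 0)
    (hCKY : ∀ u v w : V,
      ⟪D u (T v) - T (D u v), w⟫ + ⟪D v (T u) - T (D v u), w⟫
        = 2 * ⟪u, v⟫ * ⟪ξ, w⟫ - ⟪v, w⟫ * ⟪ξ, u⟫ - ⟪u, w⟫ * ⟪ξ, v⟫) :
    ∀ x : V, ⟪x, ξ⟫ = 0 → ⟪lb ξ x, ξ⟫ = 0 := by
  -- antisymmetry of the bracket
  have hlb : ∀ u v : V, lb u v = - lb v u := by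
    intro u v
    have h := hanti (u + v)
    simp only [map_add, LinearMap.add_apply, hanti u, hanti v, zero_add, add_zero] at h
    exact eq_neg_of_add_eq_zero_right h
  -- D u is skew-symmetric: ⟪D u v, w⟫ = -⟪D u w, v⟫
  have hDskew : ∀ u v w : V, ⟪D u v, w⟫ = -⟪D u w, v⟫ := by
    intro u v w
    have h1 := hD u v w
    have h2 := hD u w v
    have e1 : ⟪lb u v, w⟫ = -⟪lb v u, w⟫ := by rw [hlb u v]; simp
    have e2 : ⟪lb v w, u⟫ = -⟪lb w v, u⟫ := by rw [hlb v w]; simp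
    have e3 : ⟪lb w u, v⟫ = -⟪lb u w, v⟫ := by rw [hlb w u]; simp
    nlinarith [h1, h2, e1, e2, e3]
  have hDself : ∀ u v : V, ⟪D u v, v⟫ = 0 := by
    intro u v
    have := hDskew u v v
    linarith
  -- ⟪u, T u⟫ = 0
  have hTself : ∀ u : V, ⟪u, T u⟫ = 0 := by
    intro u
    have h := hTskew u u
    have h2 : ⟪T u, u⟫ = ⟪u, T u⟫ := real_inner_comm _ _
    linarith
  -- diagonal CKY identity
  have hdiag : ∀ u w : V, ⟪D u (T u) - T (D u u), w⟫
      = ⟪u, u⟫ * ⟪ξ, w⟫ - ⟪u, w⟫ * ⟪ξ, u⟫ := by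
    intro u w
    have h := hCKY u u w
    linarith
  -- Step 1: T ξ = 0.
  have hTxi : T ξ = 0 := by
    -- the operator T ∘ T is symmetric
    have hsymm : (T ∘ₗ T).IsSymmetric := by
      intro a b
      simp only [LinearMap.comp_apply]
      rw [hTskew (T a) b, hTskew a (T b)]
      ring
    -- for every eigenvector u of T ∘ T, ⟪ξ, T u⟫ = 0
    have hkey : ∀ (μ : ℝ) (u : V), (T ∘ₗ T) u = μ • u → u ≠ 0 → ⟪ξ, T u⟫ = 0 := by
      intro μ u hu hu0
      have h := hdiag u (T u)
      -- LHS vanishes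
      have l1 : ⟪D u (T u), T u⟫ = 0 := hDself u (T u)
      have l2 : ⟪T (D u u), T u⟫ = 0 := by
        rw [hTskew (D u u) (T u)]
        have : T (T u) = μ • u := hu
        rw [show T (T u) = μ • u from hu]
        rw [real_inner_smul_right]
        rw [hDself u u]
        ring
      have l3 : ⟪u, T u⟫ = 0 := hTself u
      have hLHS : ⟪D u (T u) - T (D u u), T u⟫ = 0 := by
        rw [inner_sub_left, l1, l2]; ring
      rw [hLHS, l3] at h
      have hnu : ⟪u, u⟫ ≠ 0 := inner_self_ne_zero.mpr hu0
      have : ⟪u, u⟫ * ⟪ξ, T u⟫ = 0 := by linarith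
      rcases mul_eq_zero.mp this with h' | h'
      · exact absurd h' hnu
      · exact h'
    -- spectral decomposition
    have hn : Module.finrank ℝ V = Module.finrank ℝ V := rfl
    set b := hsymm.eigenvectorBasis hn with hb
    have hall : ∀ i, ⟪T ξ, b i⟫ = 0 := by
      intro i
      have hev := hsymm.hasEigenvector_eigenvectorBasis hn i
      have happ : (T ∘ₗ T) (b i) = (hsymm.eigenvalues hn i) • b i :=
        hev.apply_eq_smul
      have hne : b i ≠ 0 := hev.right
      have h0 : ⟪ξ, T (b i)⟫ = 0 := hkey _ _ happ hne
      rw [hTskew ξ (b i), h0, neg_zero]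
    have : T ξ = ∑ i, ⟪b i, T ξ⟫ • b i := (b.sum_repr' (T ξ)).symm
    rw [this]
    apply Finset.sum_eq_zero
    intro i _
    rw [real_inner_comm, hall i, zero_smul]
  -- Step 2: q := D ξ ξ satisfies T q = 0
  set q := D ξ ξ with hq
  have hTq : T q = 0 := by
    have key : ∀ w : V, ⟪T q, w⟫ = 0 := by
      intro w
      have h := hdiag ξ w
      have : D ξ (T ξ) = 0 := by rw [hTxi]; simp
      rw [this] at h
      have h2 : ⟪(0 : V) - T (D ξ ξ), w⟫ = ⟪ξ, ξ⟫ * ⟪ξ, w⟫ - ⟪ξ, w⟫ * ⟪ξ, ξ⟫ := h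
      have h3 : -⟪T (D ξ ξ), w⟫ = 0 := by
        rw [zero_sub, inner_neg_left] at h2
        rw [h2]; ring
      have := neg_eq_zero.mp h3
      exact this
    have := key (T q)
    exact inner_self_eq_zero.mp (by rw [← this])
  -- ⟪q, ξ⟫ = 0
  have hqxi : ⟪q, ξ⟫ = 0 := by
    have := hDself ξ ξ
    exact this
  -- Step 3: q = 0
  have hq0 : q = 0 := by
    have h := hdiag q ξ
    have l1 : D q (T q) = 0 := by rw [hTq]; simp
    have l2 : ⟪T (D q q), ξ⟫ = 0 := by
      rw [hTskew (D q q) ξ, hTxi]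
      simp
    have hLHS : ⟪D q (T q) - T (D q q), ξ⟫ = 0 := by
      rw [inner_sub_left, l1, l2]
      simp
    rw [hLHS, hqxi] at h
    have hnξ : ⟪ξ, ξ⟫ ≠ 0 := inner_self_ne_zero.mpr hξ
    have hiq : ⟪ξ, q⟫ = 0 := by rw [real_inner_comm]; exact hqxi
    rw [hiq] at h
    have : ⟪q, q⟫ * ⟪ξ, ξ⟫ = 0 := by linarith
    rcases mul_eq_zero.mp this with h' | h'
    · exact inner_self_eq_zero.mp h'
    · exact absurd h' hnξ
  -- Step 4: conclude
  intro x _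
  have h := hD ξ ξ x
  rw [hanti ξ] at h
  have e1 : ⟪lb x ξ, ξ⟫ = -⟪lb ξ x, ξ⟫ := by rw [hlb x ξ]; simp
  have e2 : ⟪D ξ ξ, x⟫ = 0 := by rw [← hq, hq0]; simp
  rw [e2] at h
  simp only [inner_zero_left, zero_sub] at h
  rw [e1] at h
  linarith
end

section
/- Let T be a CKY tensor on a metric Lie algebra (g, ⟨·,·⟩) with associated dual vector ξ ≠ 0. Then ∇_ξ ξ = 0, where ∇ is the Levi-Civita connection. -/
open scoped RealInnerProductSpace

/-- If `T` is a CKY tensor with nonzero dual vector `ξ`, then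
`∇_ξ ξ = 0` for the Levi-Civita connection. -/
theorem cky_nabla_xi_xi_eq_zero
    {V : Type*} [NormedAddCommGroup V] [InnerProductSpace ℝ V] [FiniteDimensional ℝ V]
    (lb : V →ₗ[ℝ] V →ₗ[ℝ] V)
    (hanti : ∀ u : V, lb u u = 0)
    (hjac : ∀ u v w : V, lb u (lb v w) + lb v (lb w u) + lb w (lb u v) = 0)
    (D : V →ₗ[ℝ] V →ₗ[ℝ] V)
    (hD : ∀ u v w : V, 2 * ⟪D u v, w⟫ = ⟪lb u v, w⟫ - ⟪lb v w, u⟫ + ⟪lb w u, v⟫)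
    (T : V →ₗ[ℝ] V)
    (hTskew : ∀ u v : V, ⟪T u, v⟫ = -⟪u, T v⟫)
    (ξ : V) (hξ : ξ ≠ 0)
    (hCKY : ∀ u v w : V,
      ⟪D u (T v) - T (D u v), w⟫ + ⟪D v (T u) - T (D v u), w⟫
        = 2 * ⟪u, v⟫ * ⟪ξ, w⟫ - ⟪v, w⟫ * ⟪ξ, u⟫ - ⟪u, w⟫ * ⟪ξ, v⟫) :
    D ξ ξ = 0 := by
  -- antisymmetry of the bracket
  have hlb : ∀ u v : V, lb u v = - lb v u := by
    intro u v
    have h := hanti (u + v)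
    simp only [map_add, LinearMap.add_apply, hanti, add_zero, zero_add] at h
    exact eq_neg_of_add_eq_zero_right h
  -- D x is skew-symmetric
  have hDskew : ∀ x y z : V, ⟪D x y, z⟫ = - ⟪D x z, y⟫ := by
    intro x y z
    have h1 := hD x y z
    have h2 := hD x z y
    rw [hlb x z, hlb z y, hlb y x] at h2
    simp only [inner_neg_left] at h2
    linarith
  have hDself : ∀ x y : V, ⟪D x y, y⟫ = 0 := by
    intro x y
    have := hDskew x y y
    linarith
  -- the CKY identity with u = v = x
  have hI : ∀ x w : V,
      ⟪D x (T x), w⟫ - ⟪T (D x x), w⟫ = ⟪x, x⟫ * ⟪ξ, w⟫ - ⟪x, w⟫ * ⟪ξ, x⟫ := by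
    intro x w
    have h := hCKY x x w
    simp only [inner_sub_left] at h
    linarith
  -- ⟪x, T x⟫ = 0
  have hTxx : ∀ x : V, ⟪x, T x⟫ = 0 := by
    intro x
    have h1 := hTskew x x
    have h2 := real_inner_comm (T x) x
    linarith
  -- key eigenvector fact
  have hkey : ∀ (x : V) (μ : ℝ), T (T x) = μ • x → ⟪x, x⟫ * ⟪T ξ, x⟫ = 0 := by
    intro x μ hx
    have h := hI x (T x)
    rw [hDself x (T x)] at h
    have h2 : ⟪T (D x x), T x⟫ = 0 := by
      rw [hTskew (D x x) (T x), hx, inner_smul_right, hDself x x]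
      ring
    have h3 : ⟪ξ, T x⟫ = -⟪T ξ, x⟫ := by
      have := hTskew ξ x
      linarith
    rw [h2, hTxx x, h3] at h
    linarith
  -- T ∘ T is symmetric
  have hsym : (T ∘ₗ T).IsSymmetric := by
    intro x y
    simp only [LinearMap.comp_apply]
    rw [hTskew (T x) y, hTskew x (T y)]
    ring
  -- conclude T ξ = 0 via the spectral theorem
  have hb : T ξ = 0 := by
    have hn : Module.finrank ℝ V = Module.finrank ℝ V := rfl
    let B := hsym.eigenvectorBasis hn
    have hzero : ∀ i, ⟪B i, T ξ⟫ = 0 := by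
      intro i
      have happly := hsym.apply_eigenvectorBasis hn i
      have hk := hkey (B i) (hsym.eigenvalues hn i) happly
      have hnorm : ⟪B i, B i⟫ = 1 := by
        rw [real_inner_self_eq_norm_sq, B.orthonormal.1 i]
        norm_num
      rw [hnorm, one_mul] at hk
      rw [real_inner_comm]
      exact hk
    have := B.sum_repr (T ξ)
    rw [← this]
    apply Finset.sum_eq_zero
    intro i _
    rw [B.repr_apply_apply, hzero i, zero_smul]
  -- T (D ξ ξ) = 0
  have hTa : T (D ξ ξ) = 0 := by
    have hz : ∀ w : V, ⟪T (D ξ ξ), w⟫ = 0 := by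
      intro w
      have h := hI ξ w
      rw [hb, map_zero, inner_zero_left] at h
      have : ⟪ξ, ξ⟫ * ⟪ξ, w⟫ - ⟪ξ, w⟫ * ⟪ξ, ξ⟫ = 0 := by ring
      linarith [h, this]
    have := hz (T (D ξ ξ))
    exact inner_self_eq_zero.mp this
  -- final step
  have haξ : ⟪D ξ ξ, ξ⟫ = 0 := hDself ξ ξ
  have hfin := hI (D ξ ξ) ξ
  rw [hTa, map_zero, inner_zero_left] at hfin
  have h2 : ⟪T (D (D ξ ξ) (D ξ ξ)), ξ⟫ = 0 := by
    rw [hTskew (D (D ξ ξ) (D ξ ξ)) ξ, hb, inner_zero_right]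
    ring
  have h3 : ⟪ξ, D ξ ξ⟫ = 0 := by rw [real_inner_comm]; exact haξ
  rw [h2, haξ, h3] at hfin
  -- hfin : 0 - 0 = ⟪D ξ ξ, D ξ ξ⟫ * ⟪ξ, ξ⟫ - 0 * 0
  have hmul : ⟪D ξ ξ, D ξ ξ⟫ * ⟪ξ, ξ⟫ = 0 := by linarith
  rcases mul_eq_zero.mp hmul with h | h
  · exact inner_self_eq_zero.mp h
  · exact absurd (inner_self_eq_zero.mp h) hξ
end

section
/- Let (h, [·,·], ⟨·,·⟩) be a metric Lie algebra with an invertible Killing-Yano tensor S such that the 2-form μ(x,y) = −2⟨S^{-1}x, y⟩ is closed (i.e., μ([x,y],z) + μ([y,z],x) + μ([z,x],y) = 0). Form the central extension g = h ⊕ ℝξ with brackets [h, ξ]_μ = 0 and [x,y]_μ = [x,y] + μ(x,y)ξ for x,y ∈ h, with inner product extending that of h so that ⟨h, ξ⟩ = 0 and ‖ξ‖ > 0. Then the endomorphism T of g defined by T|_h = S and Tξ = 0 is a strict CKY tensor on (g, ⟨·,·⟩). -/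
open scoped RealInnerProductSpace

/-- central extension of a metric Lie algebra `h = ξ^⊥` by an
invertible Killing-Yano tensor `S` with `μ(x,y) = -2⟪S⁻¹x, y⟫` closed, produces a
strict CKY tensor `T` (`T|_h = S`, `Tξ = 0`, i.e. `T = S`) on
`g = h ⊕_μ ℝξ`. The conclusion includes the Jacobi identity for the extended
bracket. -/
theorem central_extension_strict_cky
    {V : Type*} [NormedAddCommGroup V] [InnerProductSpace ℝ V] [FiniteDimensional ℝ V]
    (ξ : V) (hξ : ξ ≠ 0)
    -- the Lie bracket of h, extended by zero on ℝξ
    (lbh : V →ₗ[ℝ] V →ₗ[ℝ] V)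
    (hhH : ∀ u v : V, lbh u v ∈ (ℝ ∙ ξ)ᗮ)
    (hhxi : ∀ u : V, lbh ξ u = 0 ∧ lbh u ξ = 0)
    (hhanti : ∀ u : V, lbh u u = 0)
    (hhjac : ∀ u v w : V, lbh u (lbh v w) + lbh v (lbh w u) + lbh w (lbh u v) = 0)
    -- the Levi-Civita connection of (h, ⟨·,·⟩)
    (Dh : V →ₗ[ℝ] V →ₗ[ℝ] V)
    (hDhH : ∀ u v : V, Dh u v ∈ (ℝ ∙ ξ)ᗮ)
    (hDh : ∀ u v w : V, u ∈ (ℝ ∙ ξ)ᗮ → v ∈ (ℝ ∙ ξ)ᗮ → w ∈ (ℝ ∙ ξ)ᗮ →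
      2 * ⟪Dh u v, w⟫ = ⟪lbh u v, w⟫ - ⟪lbh v w, u⟫ + ⟪lbh w u, v⟫)
    -- the invertible KY tensor S on h, extended by S ξ = 0
    (S : V →ₗ[ℝ] V)
    (hSskew : ∀ u v : V, ⟪S u, v⟫ = -⟪u, S v⟫)
    (hSxi : S ξ = 0)
    (hSH : ∀ u ∈ (ℝ ∙ ξ)ᗮ, S u ∈ (ℝ ∙ ξ)ᗮ)
    (hSinv : ∀ v ∈ (ℝ ∙ ξ)ᗮ, ∃ u ∈ (ℝ ∙ ξ)ᗮ, S u = v)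
    (hSKY : ∀ u v w : V, u ∈ (ℝ ∙ ξ)ᗮ → v ∈ (ℝ ∙ ξ)ᗮ → w ∈ (ℝ ∙ ξ)ᗮ →
      ⟪Dh u (S v) - S (Dh u v), w⟫ + ⟪Dh v (S u) - S (Dh v u), w⟫ = 0)
    -- the 2-form μ(x,y) = -2⟪S⁻¹ x, y⟫ on h, extended by zero on ℝξ
    (μ : V →ₗ[ℝ] V →ₗ[ℝ] ℝ)
    (hμ : ∀ u v : V, u ∈ (ℝ ∙ ξ)ᗮ → v ∈ (ℝ ∙ ξ)ᗮ → μ (S u) v = -2 * ⟪u, v⟫)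
    (hμxi : ∀ u : V, μ ξ u = 0 ∧ μ u ξ = 0)
    (hμclosed : ∀ u v w : V, μ (lbh u v) w + μ (lbh v w) u + μ (lbh w u) v = 0)
    -- the extended bracket [x,y]_μ = [x,y] + μ(x,y) ξ
    (lbg : V →ₗ[ℝ] V →ₗ[ℝ] V)
    (hlbg : ∀ u v : V, lbg u v = lbh u v + μ u v • ξ)
    -- the Levi-Civita connection of (g, ⟨·,·⟩)
    (Dg : V →ₗ[ℝ] V →ₗ[ℝ] V)
    (hDg : ∀ u v w : V, 2 * ⟪Dg u v, w⟫ = ⟪lbg u v, w⟫ - ⟪lbg v w, u⟫ + ⟪lbg w u, v⟫) :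
    (∀ u v w : V, lbg u (lbg v w) + lbg v (lbg w u) + lbg w (lbg u v) = 0) ∧
    ∃ ζ : V, ζ ≠ 0 ∧ ∀ u v w : V,
      ⟪Dg u (S v) - S (Dg u v), w⟫ + ⟪Dg v (S u) - S (Dg v u), w⟫
        = 2 * ⟪u, v⟫ * ⟪ζ, w⟫ - ⟪v, w⟫ * ⟪ζ, u⟫ - ⟪u, w⟫ * ⟪ζ, v⟫ := by
  have hN : (⟪ξ, ξ⟫ : ℝ) ≠ 0 := inner_self_ne_zero.mpr hξ
  have hOrth : ∀ x : V, x ∈ (ℝ ∙ ξ)ᗮ → ⟪ξ, x⟫ = 0 := fun x hx =>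
    Submodule.mem_orthogonal_singleton_iff_inner_right.mp hx
  have hOrth' : ∀ x : V, x ∈ (ℝ ∙ ξ)ᗮ → ⟪x, ξ⟫ = 0 := fun x hx => by
    rw [real_inner_comm]; exact hOrth x hx
  -- orthogonal decomposition
  have hproj : ∀ x : V, ∃ x₀ s, x₀ ∈ (ℝ ∙ ξ)ᗮ ∧ x = x₀ + s • ξ ∧ ⟪ξ, x⟫ = s * ⟪ξ, ξ⟫ := by
    intro x
    refine ⟨x - (⟪ξ, x⟫ / ⟪ξ, ξ⟫) • ξ, ⟪ξ, x⟫ / ⟪ξ, ξ⟫, ?_, by abel, ?_⟩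
    · rw [Submodule.mem_orthogonal_singleton_iff_inner_right, inner_sub_right,
        real_inner_smul_right]
      field_simp
      ring
    · field_simp
  -- μ evaluation lemmas
  have hμSr : ∀ x y : V, x ∈ (ℝ ∙ ξ)ᗮ → y ∈ (ℝ ∙ ξ)ᗮ → μ x (S y) = 2 * ⟪x, y⟫ := by
    intro x y hx hy
    obtain ⟨p, hp, hSp⟩ := hSinv x hx
    rw [← hSp, hμ p (S y) hp (hSH y hy)]
    linear_combination (-2 : ℝ) * hSskew p y
  have hμskewH : ∀ x y : V, x ∈ (ℝ ∙ ξ)ᗮ → y ∈ (ℝ ∙ ξ)ᗮ → μ x y = - μ y x := by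
    intro x y hx hy
    obtain ⟨q, hq, hSq⟩ := hSinv y hy
    rw [← hSq, hμSr x q hx hq, hμ q x hq hx, real_inner_comm]
    ring
  -- bilinear maps kill the ξ-component
  have hlbh2 : ∀ (p q : V) (s t : ℝ), lbh (p + s • ξ) (q + t • ξ) = lbh p q := by
    intro p q s t
    simp [map_add, map_smul, LinearMap.add_apply, LinearMap.smul_apply, hhxi]
  have hμ2 : ∀ (p q : V) (s t : ℝ), μ (p + s • ξ) (q + t • ξ) = μ p q := by
    intro p q s t
    simp [map_add, map_smul, LinearMap.add_apply, LinearMap.smul_apply, hμxi]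
  have hμflip : ∀ x u : V, x ∈ (ℝ ∙ ξ)ᗮ → μ u x = - μ x u := by
    intro x u hx
    obtain ⟨u₁, s, hu₁, hueq, -⟩ := hproj u
    have e1 : μ u x = μ u₁ x := by
      rw [hueq]; simp [map_add, map_smul, LinearMap.add_apply, LinearMap.smul_apply, hμxi]
    have e2 : μ x u = μ x u₁ := by
      rw [hueq]; simp [map_add, map_smul, hμxi]
    rw [e1, e2]; exact hμskewH u₁ x hu₁ hx
  constructor
  · -- Jacobi identity for the extended bracket
    intro u v w
    have expand : ∀ x y z : V, lbg x (lbg y z) = lbh x (lbh y z) + μ x (lbh y z) • ξ := by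
      intro x y z
      rw [hlbg, hlbg]
      simp [map_add, map_smul, LinearMap.add_apply, LinearMap.smul_apply, hhxi, hμxi]
    rw [expand u v w, expand v w u, expand w u v]
    have hsum : μ u (lbh v w) + μ v (lbh w u) + μ w (lbh u v) = 0 := by
      rw [hμflip (lbh v w) u (hhH v w), hμflip (lbh w u) v (hhH w u),
        hμflip (lbh u v) w (hhH u v)]
      linarith [hμclosed u v w]
    have j := hhjac u v w
    calc lbh u (lbh v w) + μ u (lbh v w) • ξ + (lbh v (lbh w u) + μ v (lbh w u) • ξ) +
          (lbh w (lbh u v) + μ w (lbh u v) • ξ)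
        = (lbh u (lbh v w) + lbh v (lbh w u) + lbh w (lbh u v)) +
          (μ u (lbh v w) + μ v (lbh w u) + μ w (lbh u v)) • ξ := by module
      _ = 0 := by rw [j, hsum, zero_smul, add_zero]
  · -- the strict CKY identity with ζ = ξ
    refine ⟨ξ, hξ, ?_⟩
    have hinlbh : ∀ (x y q : V) (t : ℝ), q ∈ (ℝ ∙ ξ)ᗮ →
        ⟪lbh x y, q + t • ξ⟫ = ⟪lbh x y, q⟫ := by
      intro x y q t hq
      rw [inner_add_right, real_inner_smul_right, hOrth' (lbh x y) (hhH x y)]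
      ring
    have hinner2 : ∀ (p q : V) (s t : ℝ), p ∈ (ℝ ∙ ξ)ᗮ → q ∈ (ℝ ∙ ξ)ᗮ →
        ⟪p + s • ξ, q + t • ξ⟫ = ⟪p, q⟫ + s * t * ⟪ξ, ξ⟫ := by
      intro p q s t hp hq
      rw [inner_add_left, inner_add_right, inner_add_right, real_inner_smul_left,
        real_inner_smul_left, real_inner_smul_right, real_inner_smul_right,
        hOrth' p hp, hOrth q hq]
      ring
    have hKg : ∀ (x y z x₀ y₀ z₀ : V) (s t r : ℝ), x = x₀ + s • ξ → y = y₀ + t • ξ →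
        z = z₀ + r • ξ → x₀ ∈ (ℝ ∙ ξ)ᗮ → y₀ ∈ (ℝ ∙ ξ)ᗮ → z₀ ∈ (ℝ ∙ ξ)ᗮ →
        2 * ⟪Dg x y, z⟫ = (⟪lbh x₀ y₀, z₀⟫ - ⟪lbh y₀ z₀, x₀⟫ + ⟪lbh z₀ x₀, y₀⟫)
          + μ x₀ y₀ * (r * ⟪ξ, ξ⟫) - μ y₀ z₀ * (s * ⟪ξ, ξ⟫) + μ z₀ x₀ * (t * ⟪ξ, ξ⟫) := by
      intro x y z x₀ y₀ z₀ s t r hx hy hz hx₀ hy₀ hz₀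
      subst hx hy hz
      have e := hDg (x₀ + s • ξ) (y₀ + t • ξ) (z₀ + r • ξ)
      rw [hlbg, hlbg, hlbg, hlbh2, hlbh2, hlbh2, hμ2, hμ2, hμ2] at e
      rw [inner_add_left, inner_add_left, inner_add_left, real_inner_smul_left,
        real_inner_smul_left, real_inner_smul_left,
        hinlbh _ _ _ _ hz₀, hinlbh _ _ _ _ hx₀, hinlbh _ _ _ _ hy₀] at e
      have i1 : ⟪ξ, z₀ + r • ξ⟫ = r * ⟪ξ, ξ⟫ := by
        rw [inner_add_right, real_inner_smul_right, hOrth z₀ hz₀]; ring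
      have i2 : ⟪ξ, x₀ + s • ξ⟫ = s * ⟪ξ, ξ⟫ := by
        rw [inner_add_right, real_inner_smul_right, hOrth x₀ hx₀]; ring
      have i3 : ⟪ξ, y₀ + t • ξ⟫ = t * ⟪ξ, ξ⟫ := by
        rw [inner_add_right, real_inner_smul_right, hOrth y₀ hy₀]; ring
      rw [i1, i2, i3] at e
      linarith [e]
    intro u v w
    obtain ⟨u₀, a, hu₀, hu, hξu⟩ := hproj u
    obtain ⟨v₀, b, hv₀, hv, hξv⟩ := hproj v
    obtain ⟨w₀, c, hw₀, hw, hξw⟩ := hproj w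
    have hSu0 : S u = S u₀ + (0 : ℝ) • ξ := by rw [hu]; simp [map_add, map_smul, hSxi]
    have hSv0 : S v = S v₀ + (0 : ℝ) • ξ := by rw [hv]; simp [map_add, map_smul, hSxi]
    have hSw0 : S w = S w₀ + (0 : ℝ) • ξ := by rw [hw]; simp [map_add, map_smul, hSxi]
    have hE1 := hKg u (S v) w u₀ (S v₀) w₀ a 0 c hu hSv0 hw hu₀ (hSH _ hv₀) hw₀
    have hE2 := hKg u v (S w) u₀ v₀ (S w₀) a b 0 hu hv hSw0 hu₀ hv₀ (hSH _ hw₀)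
    have hE3 := hKg v (S u) w v₀ (S u₀) w₀ b 0 c hv hSu0 hw hv₀ (hSH _ hu₀) hw₀
    have hE4 := hKg v u (S w) v₀ u₀ (S w₀) b a 0 hv hu hSw0 hv₀ hu₀ (hSH _ hw₀)
    have k1 := hDh u₀ (S v₀) w₀ hu₀ (hSH _ hv₀) hw₀
    have k2 := hDh u₀ v₀ (S w₀) hu₀ hv₀ (hSH _ hw₀)
    have k3 := hDh v₀ (S u₀) w₀ hv₀ (hSH _ hu₀) hw₀
    have k4 := hDh v₀ u₀ (S w₀) hv₀ hu₀ (hSH _ hw₀)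
    have ky := hSKY u₀ v₀ w₀ hu₀ hv₀ hw₀
    rw [inner_sub_left, inner_sub_left] at ky
    have s1 := hSskew (Dh u₀ v₀) w₀
    have s2 := hSskew (Dh v₀ u₀) w₀
    have m1 := hμSr u₀ v₀ hu₀ hv₀
    have m2 := hμ v₀ w₀ hv₀ hw₀
    have m3 := hμSr v₀ w₀ hv₀ hw₀
    have m4 := hμ w₀ u₀ hw₀ hu₀
    have m5 := hμSr v₀ u₀ hv₀ hu₀
    have m6 := hμ u₀ w₀ hu₀ hw₀
    have m7 := hμSr u₀ w₀ hu₀ hw₀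
    have m8 := hμ w₀ v₀ hw₀ hv₀
    have cp : (⟪v₀, u₀⟫ : ℝ) = ⟪u₀, v₀⟫ := real_inner_comm _ _
    have cr : (⟪w₀, u₀⟫ : ℝ) = ⟪u₀, w₀⟫ := real_inner_comm _ _
    have cq : (⟪w₀, v₀⟫ : ℝ) = ⟪v₀, w₀⟫ := real_inner_comm _ _
    have hSum : 2 * (⟪Dg u (S v), w⟫ + ⟪Dg u v, S w⟫ + ⟪Dg v (S u), w⟫ + ⟪Dg v u, S w⟫)
        = 4 * ⟪u₀, v₀⟫ * (c * ⟪ξ, ξ⟫) - 2 * ⟪v₀, w₀⟫ * (a * ⟪ξ, ξ⟫)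
          - 2 * ⟪u₀, w₀⟫ * (b * ⟪ξ, ξ⟫) := by
      linear_combination hE1 + hE2 + hE3 + hE4 - k1 - k2 - k3 - k4 + 2 * ky + 2 * s1 + 2 * s2
        + (c * ⟪ξ, ξ⟫) * m1 - (a * ⟪ξ, ξ⟫) * m2 - (a * ⟪ξ, ξ⟫) * m3 + (b * ⟪ξ, ξ⟫) * m4
        + (c * ⟪ξ, ξ⟫) * m5 - (b * ⟪ξ, ξ⟫) * m6 - (b * ⟪ξ, ξ⟫) * m7 + (a * ⟪ξ, ξ⟫) * m8
        + 2 * (c * ⟪ξ, ξ⟫) * cp - 2 * (b * ⟪ξ, ξ⟫) * cr - 2 * (a * ⟪ξ, ξ⟫) * cq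
    have huv : (⟪u, v⟫ : ℝ) = ⟪u₀, v₀⟫ + a * b * ⟪ξ, ξ⟫ := by
      rw [hu, hv]; exact hinner2 _ _ _ _ hu₀ hv₀
    have hvw : (⟪v, w⟫ : ℝ) = ⟪v₀, w₀⟫ + b * c * ⟪ξ, ξ⟫ := by
      rw [hv, hw]; exact hinner2 _ _ _ _ hv₀ hw₀
    have huw : (⟪u, w⟫ : ℝ) = ⟪u₀, w₀⟫ + a * c * ⟪ξ, ξ⟫ := by
      rw [hu, hw]; exact hinner2 _ _ _ _ hu₀ hw₀
    have t1 := hSskew (Dg u v) w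
    have t2 := hSskew (Dg v u) w
    rw [inner_sub_left, inner_sub_left, huv, hvw, huw, hξu, hξv, hξw]
    linear_combination hSum / 2 - t1 - t2
end

section
/- Let g be the 5-dimensional real Lie algebra with orthonormal basis {ξ, z₁, z₂, x, y} and Lie brackets [ξ,x] = r z₁ + a₄ y, [ξ,y] = r z₂ − a₄ x, [x,y] = s ξ, where r, s > 0 and a₄ = (s² − r²)/s. Then the skew-symmetric endomorphism T determined by the 2-form ω = (2(s²+2r²)/(r²s)) z¹∧z² + (2/r)(z¹∧x* + z²∧y*) + (4/s) x*∧y* (in the metric dual basis) is a strict CKY tensor with associated dual vector ξ. -/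
open scoped RealInnerProductSpace

noncomputable abbrev V5 : Type := EuclideanSpace ℝ (Fin 5)

/-- standard orthonormal basis `{ξ, z₁, z₂, x, y} = {e 0, e 1, e 2, e 3, e 4}`. -/
noncomputable abbrev e (i : Fin 5) : V5 := EuclideanSpace.single i (1 : ℝ)

theorem inner_ee (i j : Fin 5) : ⟪e i, e j⟫ = if i = j then (1:ℝ) else 0 := by
  rw [show (⟪e i, e j⟫ = (e j) i) from by
    simpa using EuclideanSpace.inner_single_left i (1:ℝ) (e j)]
  simp [EuclideanSpace.single_apply, eq_comm]

theorem fin5cases : ∀ i : Fin 5, i = 0 ∨ i = 1 ∨ i = 2 ∨ i = 3 ∨ i = 4 := by decide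

theorem hexp (v : V5) : v = ∑ i, v i • e i := by
  simpa using ((EuclideanSpace.basisFun (Fin 5) ℝ).sum_repr v).symm

set_option maxHeartbeats 4000000 in
theorem aux_jac
    (r s : ℝ)
    (lb : V5 →ₗ[ℝ] V5 →ₗ[ℝ] V5)
    (hanti : ∀ u : V5, lb u u = 0)
    (hb1 : lb (e 0) (e 3) = r • e 1 + ((s^2 - r^2)/s) • e 4)
    (hb2 : lb (e 0) (e 4) = r • e 2 - ((s^2 - r^2)/s) • e 3)
    (hb3 : lb (e 3) (e 4) = s • e 0)
    (hb4 : lb (e 0) (e 1) = 0) (hb5 : lb (e 0) (e 2) = 0)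
    (hb6 : lb (e 1) (e 2) = 0) (hb7 : lb (e 1) (e 3) = 0)
    (hb8 : lb (e 1) (e 4) = 0) (hb9 : lb (e 2) (e 3) = 0)
    (hb10 : lb (e 2) (e 4) = 0)
    (hb1r : lb (e 3) (e 0) = -(r • e 1 + ((s^2 - r^2)/s) • e 4))
    (hb2r : lb (e 4) (e 0) = -(r • e 2 - ((s^2 - r^2)/s) • e 3))
    (hb3r : lb (e 4) (e 3) = -(s • e 0))
    (hb4r : lb (e 1) (e 0) = 0) (hb5r : lb (e 2) (e 0) = 0)
    (hb6r : lb (e 2) (e 1) = 0) (hb7r : lb (e 3) (e 1) = 0)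
    (hb8r : lb (e 4) (e 1) = 0) (hb9r : lb (e 3) (e 2) = 0)
    (hb10r : lb (e 4) (e 2) = 0) :
    ∀ i j k : Fin 5,
      lb (e i) (lb (e j) (e k)) + lb (e j) (lb (e k) (e i)) + lb (e k) (lb (e i) (e j)) = 0 := by
  intro i j k
  rcases fin5cases i with rfl|rfl|rfl|rfl|rfl <;>
    rcases fin5cases j with rfl|rfl|rfl|rfl|rfl <;>
    rcases fin5cases k with rfl|rfl|rfl|rfl|rfl <;>
    · simp only [hb1, hb2, hb3, hb4, hb5, hb6, hb7, hb8, hb9, hb10,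
        hb1r, hb2r, hb3r, hb4r, hb5r, hb6r, hb7r, hb8r, hb9r, hb10r, hanti,
        map_add, map_sub, map_neg, map_smul, map_zero, smul_zero, smul_add, smul_sub,
        smul_neg, neg_zero, add_zero, zero_add, neg_neg, sub_zero, zero_sub, sub_self]
      try module

set_option maxHeartbeats 4000000 in
theorem aux_keyT (r s : ℝ)
    (T : V5 →ₗ[ℝ] V5)
    (hT0 : T (e 0) = 0)
    (hT1 : T (e 1) = (2*(s^2 + 2*r^2)/(r^2*s)) • e 2 + (2/r) • e 3)
    (hT2 : T (e 2) = -(2*(s^2 + 2*r^2)/(r^2*s)) • e 1 + (2/r) • e 4)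
    (hT3 : T (e 3) = -(2/r) • e 1 + (4/s) • e 4)
    (hT4 : T (e 4) = -(2/r) • e 2 - (4/s) • e 3) :
    ∀ i j : Fin 5, ⟪T (e i), e j⟫ = -⟪e i, T (e j)⟫ := by
  intro i j
  rcases fin5cases i with rfl|rfl|rfl|rfl|rfl <;> rcases fin5cases j with rfl|rfl|rfl|rfl|rfl <;>
    · simp only [hT0, hT1, hT2, hT3, hT4, inner_add_left, inner_add_right, inner_sub_left,
        inner_sub_right, inner_neg_left, inner_neg_right, real_inner_smul_left,
        real_inner_smul_right, inner_ee, inner_zero_left, inner_zero_right,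
        Fin.reduceEq, reduceIte, mul_zero, mul_one, add_zero, zero_add,
        neg_zero, neg_neg, sub_zero, zero_sub, sub_self, neg_add_rev]
      try ring

set_option maxHeartbeats 8000000 in
theorem aux_P1 (r s : ℝ) (hr0 : r ≠ 0) (hs0 : s ≠ 0)
    (lb : V5 →ₗ[ℝ] V5 →ₗ[ℝ] V5)
    (hanti : ∀ u : V5, lb u u = 0)
    (hb1 : lb (e 0) (e 3) = r • e 1 + ((s^2 - r^2)/s) • e 4)
    (hb2 : lb (e 0) (e 4) = r • e 2 - ((s^2 - r^2)/s) • e 3)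
    (hb3 : lb (e 3) (e 4) = s • e 0)
    (hb4 : lb (e 0) (e 1) = 0) (hb5 : lb (e 0) (e 2) = 0)
    (hb6 : lb (e 1) (e 2) = 0) (hb7 : lb (e 1) (e 3) = 0)
    (hb8 : lb (e 1) (e 4) = 0) (hb9 : lb (e 2) (e 3) = 0)
    (hb10 : lb (e 2) (e 4) = 0)
    (hb1r : lb (e 3) (e 0) = -(r • e 1 + ((s^2 - r^2)/s) • e 4))
    (hb2r : lb (e 4) (e 0) = -(r • e 2 - ((s^2 - r^2)/s) • e 3))
    (hb3r : lb (e 4) (e 3) = -(s • e 0))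
    (hb4r : lb (e 1) (e 0) = 0) (hb5r : lb (e 2) (e 0) = 0)
    (hb6r : lb (e 2) (e 1) = 0) (hb7r : lb (e 3) (e 1) = 0)
    (hb8r : lb (e 4) (e 1) = 0) (hb9r : lb (e 3) (e 2) = 0)
    (hb10r : lb (e 4) (e 2) = 0)
    (D : V5 →ₗ[ℝ] V5 →ₗ[ℝ] V5)
    (hD' : ∀ u v w : V5, ⟪D u v, w⟫ = (⟪lb u v, w⟫ - ⟪lb v w, u⟫ + ⟪lb w u, v⟫)/2)
    (T : V5 →ₗ[ℝ] V5)
    (skewg : ∀ u v : V5, ⟪T u, v⟫ = -⟪u, T v⟫)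
    (hT0 : T (e 0) = 0)
    (hT1 : T (e 1) = (2*(s^2 + 2*r^2)/(r^2*s)) • e 2 + (2/r) • e 3)
    (hT2 : T (e 2) = -(2*(s^2 + 2*r^2)/(r^2*s)) • e 1 + (2/r) • e 4)
    (hT3 : T (e 3) = -(2/r) • e 1 + (4/s) • e 4)
    (hT4 : T (e 4) = -(2/r) • e 2 - (4/s) • e 3) :
    ∀ i j k : Fin 5,
      ⟪D (e i) (T (e j)), e k⟫ - ⟪T (D (e i) (e j)), e k⟫ +
        (⟪D (e j) (T (e i)), e k⟫ - ⟪T (D (e j) (e i)), e k⟫)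
      = 2 * ⟪e i, e j⟫ * ⟪e 0, e k⟫ - ⟪e j, e k⟫ * ⟪e 0, e i⟫ - ⟪e i, e k⟫ * ⟪e 0, e j⟫ := by
  intro i j k
  rcases fin5cases i with rfl|rfl|rfl|rfl|rfl <;>
    rcases fin5cases j with rfl|rfl|rfl|rfl|rfl <;>
    rcases fin5cases k with rfl|rfl|rfl|rfl|rfl <;>
    · simp only [skewg, hT0, hT1, hT2, hT3, hT4,
        map_add, map_sub, map_neg, map_smul, map_zero,
        LinearMap.add_apply, LinearMap.sub_apply, LinearMap.neg_apply, LinearMap.smul_apply,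
        LinearMap.zero_apply, hD',
        hb1, hb2, hb3, hb4, hb5, hb6, hb7, hb8, hb9, hb10,
        hb1r, hb2r, hb3r, hb4r, hb5r, hb6r, hb7r, hb8r, hb9r, hb10r, hanti,
        inner_add_left, inner_add_right, inner_sub_left, inner_sub_right,
        inner_neg_left, inner_neg_right, real_inner_smul_left, real_inner_smul_right,
        inner_zero_left, inner_zero_right, inner_ee,
        Fin.reduceEq, reduceIte, smul_zero, smul_add, smul_sub, smul_neg, smul_smul,
        mul_zero, zero_mul, mul_one, one_mul, add_zero, zero_add, neg_zero, neg_neg,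
        sub_zero, zero_sub, sub_self]
      try field_simp
      try ring

set_option maxHeartbeats 1000000 in
/-- on the Lie algebra `g_{r,s}` with orthonormal basis
`{ξ, z₁, z₂, x, y}` and brackets `[ξ,x] = r z₁ + a₄ y`, `[ξ,y] = r z₂ − a₄ x`,
`[x,y] = s ξ` (`a₄ = (s²−r²)/s`), the tensor `T` determined by the 2-form
`ω = (2(s²+2r²)/(r²s)) z¹∧z² + (2/r)(z¹∧x* + z²∧y*) + (4/s) x*∧y*` is a strict
CKY tensor with dual vector `ξ`; moreover the brackets satisfy the Jacobi
identity. -/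
theorem grs_strict_cky
    (r s : ℝ) (hr : 0 < r) (hs : 0 < s)
    (lb : V5 →ₗ[ℝ] V5 →ₗ[ℝ] V5)
    (hanti : ∀ u : V5, lb u u = 0)
    (hb1 : lb (e 0) (e 3) = r • e 1 + ((s^2 - r^2)/s) • e 4)
    (hb2 : lb (e 0) (e 4) = r • e 2 - ((s^2 - r^2)/s) • e 3)
    (hb3 : lb (e 3) (e 4) = s • e 0)
    (hb4 : lb (e 0) (e 1) = 0) (hb5 : lb (e 0) (e 2) = 0)
    (hb6 : lb (e 1) (e 2) = 0) (hb7 : lb (e 1) (e 3) = 0)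
    (hb8 : lb (e 1) (e 4) = 0) (hb9 : lb (e 2) (e 3) = 0)
    (hb10 : lb (e 2) (e 4) = 0)
    (D : V5 →ₗ[ℝ] V5 →ₗ[ℝ] V5)
    (hD : ∀ u v w : V5, 2 * ⟪D u v, w⟫ = ⟪lb u v, w⟫ - ⟪lb v w, u⟫ + ⟪lb w u, v⟫)
    (T : V5 →ₗ[ℝ] V5)
    (hT0 : T (e 0) = 0)
    (hT1 : T (e 1) = (2*(s^2 + 2*r^2)/(r^2*s)) • e 2 + (2/r) • e 3)
    (hT2 : T (e 2) = -(2*(s^2 + 2*r^2)/(r^2*s)) • e 1 + (2/r) • e 4)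
    (hT3 : T (e 3) = -(2/r) • e 1 + (4/s) • e 4)
    (hT4 : T (e 4) = -(2/r) • e 2 - (4/s) • e 3) :
    (∀ u v w : V5, lb u (lb v w) + lb v (lb w u) + lb w (lb u v) = 0) ∧
    (∀ u v : V5, ⟪T u, v⟫ = -⟪u, T v⟫) ∧
    (e 0 : V5) ≠ 0 ∧
    (∀ u v w : V5,
      ⟪D u (T v) - T (D u v), w⟫ + ⟪D v (T u) - T (D v u), w⟫
        = 2 * ⟪u, v⟫ * ⟪e 0, w⟫ - ⟪v, w⟫ * ⟪e 0, u⟫ - ⟪u, w⟫ * ⟪e 0, v⟫) := by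
  have hr0 : r ≠ 0 := ne_of_gt hr
  have hs0 : s ≠ 0 := ne_of_gt hs
  have hswap : ∀ u v : V5, lb v u = -lb u v := by
    intro u v
    have h := hanti (u + v)
    simp only [map_add, LinearMap.add_apply, hanti, zero_add, add_zero] at h
    exact eq_neg_of_add_eq_zero_left h
  have hb1r : lb (e 3) (e 0) = -(r • e 1 + ((s^2 - r^2)/s) • e 4) := by rw [hswap, hb1]
  have hb2r : lb (e 4) (e 0) = -(r • e 2 - ((s^2 - r^2)/s) • e 3) := by rw [hswap, hb2]
  have hb3r : lb (e 4) (e 3) = -(s • e 0) := by rw [hswap, hb3]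
  have hb4r : lb (e 1) (e 0) = 0 := by rw [hswap, hb4, neg_zero]
  have hb5r : lb (e 2) (e 0) = 0 := by rw [hswap, hb5, neg_zero]
  have hb6r : lb (e 2) (e 1) = 0 := by rw [hswap, hb6, neg_zero]
  have hb7r : lb (e 3) (e 1) = 0 := by rw [hswap, hb7, neg_zero]
  have hb8r : lb (e 4) (e 1) = 0 := by rw [hswap, hb8, neg_zero]
  have hb9r : lb (e 3) (e 2) = 0 := by rw [hswap, hb9, neg_zero]
  have hb10r : lb (e 4) (e 2) = 0 := by rw [hswap, hb10, neg_zero]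
  have jac := aux_jac r s lb hanti hb1 hb2 hb3 hb4 hb5 hb6 hb7 hb8 hb9 hb10
    hb1r hb2r hb3r hb4r hb5r hb6r hb7r hb8r hb9r hb10r
  have jacA : ∀ (i j : Fin 5) (w : V5),
      lb (e i) (lb (e j) w) + lb (e j) (lb w (e i)) + lb w (lb (e i) (e j)) = 0 := by
    intro i j w
    rw [hexp w]
    simp only [map_sum, map_smul, LinearMap.sum_apply, LinearMap.smul_apply]
    rw [← Finset.sum_add_distrib, ← Finset.sum_add_distrib]
    refine Finset.sum_eq_zero fun k _ => ?_
    rw [← smul_add, ← smul_add, jac i j k, smul_zero]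
  have jacB : ∀ (i : Fin 5) (v w : V5),
      lb (e i) (lb v w) + lb v (lb w (e i)) + lb w (lb (e i) v) = 0 := by
    intro i v w
    rw [hexp v]
    simp only [map_sum, map_smul, LinearMap.sum_apply, LinearMap.smul_apply]
    rw [← Finset.sum_add_distrib, ← Finset.sum_add_distrib]
    refine Finset.sum_eq_zero fun j _ => ?_
    rw [← smul_add, ← smul_add, jacA i j w, smul_zero]
  have jacC : ∀ u v w : V5, lb u (lb v w) + lb v (lb w u) + lb w (lb u v) = 0 := by
    intro u v w
    rw [hexp u]
    simp only [map_sum, map_smul, LinearMap.sum_apply, LinearMap.smul_apply]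
    rw [← Finset.sum_add_distrib, ← Finset.sum_add_distrib]
    refine Finset.sum_eq_zero fun i _ => ?_
    rw [← smul_add, ← smul_add, jacB i v w, smul_zero]
  have keyT := aux_keyT r s T hT0 hT1 hT2 hT3 hT4
  have skewA : ∀ (u : V5) (j : Fin 5), ⟪T u, e j⟫ = -⟪u, T (e j)⟫ := by
    intro u j
    rw [hexp u]
    simp only [map_sum, map_smul, map_add, sum_inner, inner_add_left, inner_add_right,
      real_inner_smul_left, real_inner_smul_right, Fin.sum_univ_five]
    linear_combination u 0 * keyT 0 j + u 1 * keyT 1 j + u 2 * keyT 2 j + u 3 * keyT 3 j +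
      u 4 * keyT 4 j
  have skewg : ∀ u v : V5, ⟪T u, v⟫ = -⟪u, T v⟫ := by
    intro u v
    rw [hexp v]
    simp only [map_sum, map_smul, map_add, inner_sum, inner_add_left, inner_add_right,
      real_inner_smul_left, real_inner_smul_right, Fin.sum_univ_five]
    linear_combination v 0 * skewA u 0 + v 1 * skewA u 1 + v 2 * skewA u 2 + v 3 * skewA u 3 +
      v 4 * skewA u 4
  have hD' : ∀ u v w : V5, ⟪D u v, w⟫ = (⟪lb u v, w⟫ - ⟪lb v w, u⟫ + ⟪lb w u, v⟫)/2 := by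
    intro u v w
    have h := hD u v w
    linarith
  have P1 := aux_P1 r s hr0 hs0 lb hanti hb1 hb2 hb3 hb4 hb5 hb6 hb7 hb8 hb9 hb10
    hb1r hb2r hb3r hb4r hb5r hb6r hb7r hb8r hb9r hb10r D hD' T skewg hT0 hT1 hT2 hT3 hT4
  have P2 : ∀ (u : V5) (j k : Fin 5),
      ⟪D u (T (e j)), e k⟫ - ⟪T (D u (e j)), e k⟫ +
        (⟪D (e j) (T u), e k⟫ - ⟪T (D (e j) u), e k⟫)
      = 2 * ⟪u, e j⟫ * ⟪e 0, e k⟫ - ⟪e j, e k⟫ * ⟪e 0, u⟫ - ⟪u, e k⟫ * ⟪e 0, e j⟫ := by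
    intro u j k
    rw [hexp u]
    simp only [map_sum, map_smul, map_add, LinearMap.sum_apply, LinearMap.smul_apply,
      LinearMap.add_apply, sum_inner, inner_sum, inner_add_left, inner_add_right,
      real_inner_smul_left, real_inner_smul_right, Fin.sum_univ_five]
    linear_combination u 0 * P1 0 j k + u 1 * P1 1 j k + u 2 * P1 2 j k + u 3 * P1 3 j k +
      u 4 * P1 4 j k
  have P3 : ∀ (u v : V5) (k : Fin 5),
      ⟪D u (T v), e k⟫ - ⟪T (D u v), e k⟫ + (⟪D v (T u), e k⟫ - ⟪T (D v u), e k⟫)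
      = 2 * ⟪u, v⟫ * ⟪e 0, e k⟫ - ⟪v, e k⟫ * ⟪e 0, u⟫ - ⟪u, e k⟫ * ⟪e 0, v⟫ := by
    intro u v k
    rw [hexp v]
    simp only [map_sum, map_smul, map_add, LinearMap.sum_apply, LinearMap.smul_apply,
      LinearMap.add_apply, sum_inner, inner_sum, inner_add_left, inner_add_right,
      real_inner_smul_left, real_inner_smul_right, Fin.sum_univ_five]
    linear_combination v 0 * P2 u 0 k + v 1 * P2 u 1 k + v 2 * P2 u 2 k + v 3 * P2 u 3 k +
      v 4 * P2 u 4 k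
  have P4 : ∀ u v w : V5,
      ⟪D u (T v), w⟫ - ⟪T (D u v), w⟫ + (⟪D v (T u), w⟫ - ⟪T (D v u), w⟫)
      = 2 * ⟪u, v⟫ * ⟪e 0, w⟫ - ⟪v, w⟫ * ⟪e 0, u⟫ - ⟪u, w⟫ * ⟪e 0, v⟫ := by
    intro u v w
    rw [hexp w]
    simp only [inner_sum, inner_add_right, real_inner_smul_right, Fin.sum_univ_five]
    linear_combination w 0 * P3 u v 0 + w 1 * P3 u v 1 + w 2 * P3 u v 2 + w 3 * P3 u v 3 +
      w 4 * P3 u v 4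
  refine ⟨jacC, skewg, ?_, ?_⟩
  · intro h
    have h1 : (1:ℝ) = 0 := by
      have := congrArg (fun v : V5 => v 0) h
      simpa [EuclideanSpace.single_apply] using this
    norm_num at h1
  · intro u v w
    simp only [inner_sub_left]
    linear_combination P4 u v w
end

section
/- For r,s > 0 let g_{r,s} be the 5-dimensional metric Lie algebra with orthonormal basis {ξ, z₁, z₂, x, y} and brackets [ξ,x] = r z₁ + a₄ y, [ξ,y] = r z₂ − a₄ x, [x,y] = s ξ with a₄ = (s²−r²)/s. If φ : g_{r,s} → g_{r',s'} is an isometric Lie algebra isomorphism (r,s,r',s' > 0), then r = r' and s = s'. -/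
open scoped RealInnerProductSpace

lemma basis_expand (v : V5) : v = ∑ i : Fin 5, v i • e i := by
  ext j
  simp [Fin.sum_univ_five, EuclideanSpace.single_apply]
  fin_cases j <;> simp

lemma comp_eq {x y : V5} (h : x = y) (k : Fin 5) : x k = y k := by rw [h]

lemma inner5 (x y : V5) : ⟪x, y⟫ = ∑ i : Fin 5, x i * y i := by
  simp [PiLp.inner_apply]
  exact Finset.sum_congr rfl (fun i _ => mul_comm _ _)

lemma left_expand (lb : V5 →ₗ[ℝ] V5 →ₗ[ℝ] V5) (u v : V5) :
    lb u v = ∑ i : Fin 5, u i • lb (e i) v := by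
  conv_lhs => rw [basis_expand u]
  simp [LinearMap.sum_apply]

lemma right_expand (lb : V5 →ₗ[ℝ] V5 →ₗ[ℝ] V5) (u v : V5) :
    lb u v = ∑ j : Fin 5, v j • lb u (e j) := by
  conv_lhs => rw [basis_expand v]
  simp

lemma bil_expand (lb : V5 →ₗ[ℝ] V5 →ₗ[ℝ] V5) (u v : V5) :
    lb u v = ∑ i : Fin 5, ∑ j : Fin 5, (u i * v j) • lb (e i) (e j) := by
  rw [left_expand]
  simp only [fun i => right_expand lb (e i) v, Finset.smul_sum, smul_smul]


set_option maxHeartbeats 2000000 in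
/-- the metric Lie algebras `g_{r,s}` are pairwise
non-isometrically-isomorphic: if `φ : g_{r,s} → g_{r',s'}` is an isometric Lie
algebra isomorphism, then `r = r'` and `s = s'`. -/
theorem grs_pairwise_nonisometric
    (r s r' s' : ℝ) (hr : 0 < r) (hs : 0 < s) (hr' : 0 < r') (hs' : 0 < s')
    (lb lb' : V5 →ₗ[ℝ] V5 →ₗ[ℝ] V5)
    (hanti : ∀ u : V5, lb u u = 0)
    (hjac : ∀ u v w : V5, lb u (lb v w) + lb v (lb w u) + lb w (lb u v) = 0)
    (hb1 : lb (e 0) (e 3) = r • e 1 + ((s^2 - r^2)/s) • e 4)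
    (hb2 : lb (e 0) (e 4) = r • e 2 - ((s^2 - r^2)/s) • e 3)
    (hb3 : lb (e 3) (e 4) = s • e 0)
    (hb4 : lb (e 0) (e 1) = 0) (hb5 : lb (e 0) (e 2) = 0)
    (hb6 : lb (e 1) (e 2) = 0) (hb7 : lb (e 1) (e 3) = 0)
    (hb8 : lb (e 1) (e 4) = 0) (hb9 : lb (e 2) (e 3) = 0)
    (hb10 : lb (e 2) (e 4) = 0)
    (hanti' : ∀ u : V5, lb' u u = 0)
    (hjac' : ∀ u v w : V5, lb' u (lb' v w) + lb' v (lb' w u) + lb' w (lb' u v) = 0)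
    (hb1' : lb' (e 0) (e 3) = r' • e 1 + ((s'^2 - r'^2)/s') • e 4)
    (hb2' : lb' (e 0) (e 4) = r' • e 2 - ((s'^2 - r'^2)/s') • e 3)
    (hb3' : lb' (e 3) (e 4) = s' • e 0)
    (hb4' : lb' (e 0) (e 1) = 0) (hb5' : lb' (e 0) (e 2) = 0)
    (hb6' : lb' (e 1) (e 2) = 0) (hb7' : lb' (e 1) (e 3) = 0)
    (hb8' : lb' (e 1) (e 4) = 0) (hb9' : lb' (e 2) (e 3) = 0)
    (hb10' : lb' (e 2) (e 4) = 0)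
    (φ : V5 ≃ₗ[ℝ] V5)
    (hφiso : ∀ u v : V5, ⟪φ u, φ v⟫ = ⟪u, v⟫)
    (hφbr : ∀ u v : V5, φ (lb u v) = lb' (φ u) (φ v)) :
    r = r' ∧ s = s' := by
  have hskew : ∀ u v : V5, lb v u = - lb u v := by
    intro u v
    have h := hanti (u + v)
    simp only [map_add, LinearMap.add_apply, hanti, zero_add, add_zero] at h
    exact eq_neg_of_add_eq_zero_left h
  have hskew' : ∀ u v : V5, lb' v u = - lb' u v := by
    intro u v
    have h := hanti' (u + v)
    simp only [map_add, LinearMap.add_apply, hanti', zero_add, add_zero] at h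
    exact eq_neg_of_add_eq_zero_left h
  -- lb' full table (skew versions)
  have hs1' : lb' (e 3) (e 0) = -(r' • e 1 + ((s'^2 - r'^2)/s') • e 4) := by rw [hskew', hb1']
  have hs2' : lb' (e 4) (e 0) = -(r' • e 2 - ((s'^2 - r'^2)/s') • e 3) := by rw [hskew', hb2']
  have hs3' : lb' (e 4) (e 3) = -(s' • e 0) := by rw [hskew', hb3']
  have hs4' : lb' (e 1) (e 0) = 0 := by rw [hskew', hb4', neg_zero]
  have hs5' : lb' (e 2) (e 0) = 0 := by rw [hskew', hb5', neg_zero]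
  have hs6' : lb' (e 2) (e 1) = 0 := by rw [hskew', hb6', neg_zero]
  have hs7' : lb' (e 3) (e 1) = 0 := by rw [hskew', hb7', neg_zero]
  have hs8' : lb' (e 4) (e 1) = 0 := by rw [hskew', hb8', neg_zero]
  have hs9' : lb' (e 3) (e 2) = 0 := by rw [hskew', hb9', neg_zero]
  have hs10' : lb' (e 4) (e 2) = 0 := by rw [hskew', hb10', neg_zero]
  -- e 1 and e 2 are central for lb
  have row1 : ∀ v : V5, lb (e 1) v = 0 := by
    intro v
    rw [right_expand]
    have h0 : lb (e 1) (e 0) = 0 := by rw [hskew, hb4, neg_zero]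
    simp [Fin.sum_univ_five, h0, hanti, hb6, hb7, hb8]
  have row2 : ∀ v : V5, lb (e 2) v = 0 := by
    intro v
    rw [right_expand]
    have h0 : lb (e 2) (e 0) = 0 := by rw [hskew, hb5, neg_zero]
    have h1 : lb (e 2) (e 1) = 0 := by rw [hskew, hb6, neg_zero]
    simp [Fin.sum_univ_five, h0, h1, hanti, hb9, hb10]
  -- hence φ (e 1), φ (e 2) are central for lb'
  have hc : ∀ i : Fin 5, (∀ v : V5, lb (e i) v = 0) → ∀ w : V5, lb' (φ (e i)) w = 0 := by
    intro i hrow w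
    have h := hφbr (e i) (φ.symm w)
    rw [hrow, map_zero, φ.apply_symm_apply] at h
    exact h.symm
  have hc1 := hc 1 row1
  have hc2 := hc 2 row2
  -- zero components of φ (e 1), φ (e 2)
  have zc : ∀ i : Fin 5, (∀ w : V5, lb' (φ (e i)) w = 0) →
      φ (e i) 0 = 0 ∧ φ (e i) 3 = 0 ∧ φ (e i) 4 = 0 := by
    intro i hci
    have k3 := hci (e 3)
    rw [left_expand] at k3
    simp only [Fin.sum_univ_five, hb1', hb7', hb9', hanti', hs3'] at k3
    have k4 := hci (e 4)
    rw [left_expand] at k4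
    simp only [Fin.sum_univ_five, hb2', hb8', hb10', hb3', hanti'] at k4
    refine ⟨?_, ?_, ?_⟩
    · have h := comp_eq k3 1
      simp [PiLp.add_apply, PiLp.smul_apply, PiLp.neg_apply, PiLp.sub_apply,
        EuclideanSpace.single_apply, smul_eq_mul] at h
      exact h.resolve_right hr'.ne'
    · have h := comp_eq k4 0
      simp [PiLp.add_apply, PiLp.smul_apply, PiLp.neg_apply, PiLp.sub_apply,
        EuclideanSpace.single_apply, smul_eq_mul] at h
      exact h.resolve_right hs'.ne'
    · have h := comp_eq k3 0
      simp [PiLp.add_apply, PiLp.smul_apply, PiLp.neg_apply, PiLp.sub_apply,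
        EuclideanSpace.single_apply, smul_eq_mul] at h
      exact h.resolve_right hs'.ne'
  obtain ⟨z10, z13, z14⟩ := zc 1 hc1
  obtain ⟨z20, z23, z24⟩ := zc 2 hc2
  -- orthonormality equations
  have oth : ∀ i j : Fin 5, ∑ k : Fin 5, φ (e i) k * φ (e j) k = ∑ k : Fin 5, e i k * e j k := by
    intro i j
    have h := hφiso (e i) (e j)
    rw [inner5, inner5] at h
    exact h
  have o11 := oth 1 1
  have o22 := oth 2 2
  have o12 := oth 1 2
  have o01 := oth 0 1
  have o02 := oth 0 2
  have o31 := oth 3 1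
  have o32 := oth 3 2
  have o41 := oth 4 1
  have o42 := oth 4 2
  have o00 := oth 0 0
  have o33 := oth 3 3
  have o44 := oth 4 4
  have o03 := oth 0 3
  have o04 := oth 0 4
  have o34 := oth 3 4
  simp only [Fin.sum_univ_five, EuclideanSpace.single_apply, z10, z13, z14, z20, z23, z24]
    at o11 o22 o12 o01 o02 o31 o32 o41 o42 o00 o33 o44 o03 o04 o34
  simp only [Fin.reduceEq, if_true, if_false, reduceIte] at o11 o22 o12 o01 o02 o31 o32 o41 o42 o00 o33 o44 o03 o04 o34
  -- zero components at indices 1,2 for φ e0, φ e3, φ e4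
  have hd : ((φ (e 1) 1)*(φ (e 2) 2) - (φ (e 1) 2)*(φ (e 2) 1)) * ((φ (e 1) 1)*(φ (e 2) 2) - (φ (e 1) 2)*(φ (e 2) 1)) = 1 := by
    linear_combination ((φ (e 2) 1)*(φ (e 2) 1) + (φ (e 2) 2)*(φ (e 2) 2)) * o11 + o22 - ((φ (e 1) 1)*(φ (e 2) 1) + (φ (e 1) 2)*(φ (e 2) 2)) * o12
  have z01 : (φ (e 0) 1) = 0 := by
    linear_combination (((φ (e 1) 1)*(φ (e 2) 2) - (φ (e 1) 2)*(φ (e 2) 1))*(φ (e 2) 2))*o01 - (((φ (e 1) 1)*(φ (e 2) 2) - (φ (e 1) 2)*(φ (e 2) 1))*(φ (e 1) 2))*o02 - (φ (e 0) 1)*hd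
  have z02 : (φ (e 0) 2) = 0 := by
    linear_combination (-(((φ (e 1) 1)*(φ (e 2) 2) - (φ (e 1) 2)*(φ (e 2) 1))*(φ (e 2) 1)))*o01 + (((φ (e 1) 1)*(φ (e 2) 2) - (φ (e 1) 2)*(φ (e 2) 1))*(φ (e 1) 1))*o02 - (φ (e 0) 2)*hd
  have z31 : (φ (e 3) 1) = 0 := by
    linear_combination (((φ (e 1) 1)*(φ (e 2) 2) - (φ (e 1) 2)*(φ (e 2) 1))*(φ (e 2) 2))*o31 - (((φ (e 1) 1)*(φ (e 2) 2) - (φ (e 1) 2)*(φ (e 2) 1))*(φ (e 1) 2))*o32 - (φ (e 3) 1)*hd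
  have z32 : (φ (e 3) 2) = 0 := by
    linear_combination (-(((φ (e 1) 1)*(φ (e 2) 2) - (φ (e 1) 2)*(φ (e 2) 1))*(φ (e 2) 1)))*o31 + (((φ (e 1) 1)*(φ (e 2) 2) - (φ (e 1) 2)*(φ (e 2) 1))*(φ (e 1) 1))*o32 - (φ (e 3) 2)*hd
  have z41 : (φ (e 4) 1) = 0 := by
    linear_combination (((φ (e 1) 1)*(φ (e 2) 2) - (φ (e 1) 2)*(φ (e 2) 1))*(φ (e 2) 2))*o41 - (((φ (e 1) 1)*(φ (e 2) 2) - (φ (e 1) 2)*(φ (e 2) 1))*(φ (e 1) 2))*o42 - (φ (e 4) 1)*hd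
  have z42 : (φ (e 4) 2) = 0 := by
    linear_combination (-(((φ (e 1) 1)*(φ (e 2) 2) - (φ (e 1) 2)*(φ (e 2) 1))*(φ (e 2) 1)))*o41 + (((φ (e 1) 1)*(φ (e 2) 2) - (φ (e 1) 2)*(φ (e 2) 1))*(φ (e 1) 1))*o42 - (φ (e 4) 2)*hd
  -- bracket equation [e3,e4]
  have h34 := hφbr (e 3) (e 4)
  rw [hb3, map_smul, bil_expand lb' (φ (e 3)) (φ (e 4))] at h34
  simp only [Fin.sum_univ_five, hanti', hb1', hb2', hb3', hb4', hb5', hb6', hb7', hb8',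
    hb9', hb10', hs1', hs2', hs3', hs4', hs5', hs6', hs7', hs8', hs9', hs10'] at h34
  have E340 := comp_eq h34 0
  have E341 := comp_eq h34 1
  have E342 := comp_eq h34 2
  have E343 := comp_eq h34 3
  have E344 := comp_eq h34 4
  simp only [PiLp.add_apply, PiLp.smul_apply, PiLp.neg_apply, PiLp.sub_apply, PiLp.zero_apply,
    EuclideanSpace.single_apply, smul_eq_mul, Fin.reduceEq, reduceIte,
    mul_zero, mul_one, zero_add, add_zero, mul_neg, neg_zero] at E340 E341 E342 E343 E344
  -- bracket equation [e0,e3]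
  have h03 := hφbr (e 0) (e 3)
  rw [hb1, map_add, map_smul, map_smul, bil_expand lb' (φ (e 0)) (φ (e 3))] at h03
  simp only [Fin.sum_univ_five, hanti', hb1', hb2', hb3', hb4', hb5', hb6', hb7', hb8',
    hb9', hb10', hs1', hs2', hs3', hs4', hs5', hs6', hs7', hs8', hs9', hs10'] at h03
  have E031 := comp_eq h03 1
  have E032 := comp_eq h03 2
  simp only [PiLp.add_apply, PiLp.smul_apply, PiLp.neg_apply, PiLp.sub_apply, PiLp.zero_apply,
    EuclideanSpace.single_apply, smul_eq_mul, Fin.reduceEq, reduceIte,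
    mul_zero, mul_one, zero_add, add_zero, mul_neg, neg_zero] at E031 E032
  -- the final algebra
  have hX : (φ (e 3) 0)*(φ (e 4) 3) - (φ (e 3) 3)*(φ (e 4) 0) = 0 := by
    have h : r' * ((φ (e 3) 0)*(φ (e 4) 3) - (φ (e 3) 3)*(φ (e 4) 0)) = 0 := by linear_combination -E341 + s*z01
    exact (mul_eq_zero.mp h).resolve_left hr'.ne'
  have hY : (φ (e 3) 0)*(φ (e 4) 4) - (φ (e 3) 4)*(φ (e 4) 0) = 0 := by
    have h : r' * ((φ (e 3) 0)*(φ (e 4) 4) - (φ (e 3) 4)*(φ (e 4) 0)) = 0 := by linear_combination -E342 + s*z02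
    exact (mul_eq_zero.mp h).resolve_left hr'.ne'
  have hq1 : (φ (e 0) 3) = 0 := by
    have h : s * (φ (e 0) 3) = 0 := by linear_combination E343 - ((s'^2 - r'^2)/s')*hY
    exact (mul_eq_zero.mp h).resolve_left hs.ne'
  have hw1 : (φ (e 0) 4) = 0 := by
    have h : s * (φ (e 0) 4) = 0 := by linear_combination E344 + ((s'^2 - r'^2)/s')*hX
    exact (mul_eq_zero.mp h).resolve_left hs.ne'
  have hp1sq : (φ (e 0) 0)*(φ (e 0) 0) = 1 := by
    linear_combination o00 - (φ (e 0) 1)*z01 - (φ (e 0) 2)*z02 - (φ (e 0) 3)*hq1 - (φ (e 0) 4)*hw1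
  have hp2 : (φ (e 3) 0) = 0 := by
    linear_combination (φ (e 0) 0)*o03 - ((φ (e 0) 0)*(φ (e 3) 1))*z01 - ((φ (e 0) 0)*(φ (e 3) 2))*z02 - ((φ (e 0) 0)*(φ (e 3) 3))*hq1 - ((φ (e 0) 0)*(φ (e 3) 4))*hw1 - (φ (e 3) 0)*hp1sq
  have hp3 : (φ (e 4) 0) = 0 := by
    linear_combination (φ (e 0) 0)*o04 - ((φ (e 0) 0)*(φ (e 4) 1))*z01 - ((φ (e 0) 0)*(φ (e 4) 2))*z02 - ((φ (e 0) 0)*(φ (e 4) 3))*hq1 - ((φ (e 0) 0)*(φ (e 4) 4))*hw1 - (φ (e 4) 0)*hp1sq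
  have hQ2 : (φ (e 3) 3)*(φ (e 3) 3) + (φ (e 3) 4)*(φ (e 3) 4) = 1 := by
    linear_combination o33 - (φ (e 3) 0)*hp2 - (φ (e 3) 1)*z31 - (φ (e 3) 2)*z32
  have hQ3 : (φ (e 4) 3)*(φ (e 4) 3) + (φ (e 4) 4)*(φ (e 4) 4) = 1 := by
    linear_combination o44 - (φ (e 4) 0)*hp3 - (φ (e 4) 1)*z41 - (φ (e 4) 2)*z42
  have hA1 : r * (φ (e 1) 1) = r' * ((φ (e 0) 0)*(φ (e 3) 3)) := by
    linear_combination E031 - ((s^2 - r^2)/s)*z41 - (r'*(φ (e 3) 0))*hq1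
  have hA2 : r * (φ (e 1) 2) = r' * ((φ (e 0) 0)*(φ (e 3) 4)) := by
    linear_combination E032 - ((s^2 - r^2)/s)*z42 - (r'*(φ (e 3) 0))*hw1
  have hrsq : r^2 = r'^2 := by
    linear_combination (r*(φ (e 1) 1) + r'*((φ (e 0) 0)*(φ (e 3) 3)))*hA1 + (r*(φ (e 1) 2) + r'*((φ (e 0) 0)*(φ (e 3) 4)))*hA2 - r^2*o11
      + r'^2*((φ (e 3) 3)*(φ (e 3) 3) + (φ (e 3) 4)*(φ (e 3) 4))*hp1sq + r'^2*hQ2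
  have hrr : r = r' := by
    have h : (r - r') * (r + r') = 0 := by linear_combination hrsq
    rcases mul_eq_zero.mp h with h | h
    · linarith
    · linarith
  have ho34r : (φ (e 3) 3)*(φ (e 4) 3) + (φ (e 3) 4)*(φ (e 4) 4) = 0 := by
    linear_combination o34 - (φ (e 4) 0)*hp2 - (φ (e 4) 1)*z31 - (φ (e 4) 2)*z32
  have hssq : s^2 = s'^2 := by
    linear_combination (s*(φ (e 0) 0) + s'*((φ (e 3) 3)*(φ (e 4) 4) - (φ (e 3) 4)*(φ (e 4) 3)))*E340 - s^2*hp1sq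
      + s'^2*((φ (e 4) 3)*(φ (e 4) 3) + (φ (e 4) 4)*(φ (e 4) 4))*hQ2 + s'^2*hQ3 - s'^2*((φ (e 3) 3)*(φ (e 4) 3) + (φ (e 3) 4)*(φ (e 4) 4))*ho34r
  have hss : s = s' := by
    have h : (s - s') * (s + s') = 0 := by linear_combination hssq
    rcases mul_eq_zero.mp h with h | h
    · linarith
    · linarith
  exact ⟨hrr, hss⟩
end

section
/- For r,s > 0 with r ≠ s, let g_{r,s} be the 5-dimensional Lie algebra with basis {ξ, z₁, z₂, x, y} and brackets [ξ,x] = r z₁ + a₄ y, [ξ,y] = r z₂ − a₄ x, [x,y] = s ξ, a₄ = (s²−r²)/s. If s > r then g_{r,s} is isomorphic as a Lie algebra to ℝ² × su(2), and if s < r then g_{r,s} is isomorphic to ℝ² × sl(2,ℝ). -/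
open scoped RealInnerProductSpace

noncomputable def B5 : Module.Basis (Fin 5) ℝ V5 := (EuclideanSpace.basisFun (Fin 5) ℝ).toBasis

lemma B5_apply (i : Fin 5) : B5 i = e i := by
  simp [B5, EuclideanSpace.basisFun_apply]

lemma decomp (u : V5) : u = ∑ i, u i • e i := by
  conv_lhs => rw [← B5.sum_repr u]
  refine Finset.sum_congr rfl fun i _ => ?_
  rw [B5_apply]
  congr 1

noncomputable def lmap (v : Fin 5 → V5) : V5 →ₗ[ℝ] V5 where
  toFun u := ∑ i, u i • v i
  map_add' u w := by simp [add_smul, Finset.sum_add_distrib]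
  map_smul' c u := by simp [smul_smul, Finset.smul_sum]

lemma lmap_e (v : Fin 5 → V5) (j : Fin 5) : lmap v (e j) = v j := by
  simp [lmap, EuclideanSpace.single_apply]

lemma lin5_ext (f g : V5 →ₗ[ℝ] V5) (h : ∀ i, f (e i) = g (e i)) : f = g := by
  apply LinearMap.ext
  intro u
  rw [decomp u]
  simp [h]

lemma bilin_ext (f : V5 →ₗ[ℝ] V5) (A B : V5 →ₗ[ℝ] V5 →ₗ[ℝ] V5)
    (h : ∀ i j, f (A (e i) (e j)) = B (f (e i)) (f (e j))) (u v : V5) :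
    f (A u v) = B (f u) (f v) := by
  rw [decomp u, decomp v]
  simp [Finset.smul_sum, h]

lemma anti_swap (L : V5 →ₗ[ℝ] V5 →ₗ[ℝ] V5) (hL : ∀ u, L u u = 0) (u v : V5) :
    L v u = -L u v := by
  have h := hL (u + v)
  simp only [map_add, LinearMap.add_apply, hL u, hL v, zero_add, add_zero] at h
  exact eq_neg_of_add_eq_zero_left h

lemma iso_aux (r s a β ε : ℝ) (ha0 : a ≠ 0) (hβ0 : β ≠ 0)
    (hβ2 : β ^ 2 = ε * (s * a)) (hε : ε * ε = 1)
    (lb : V5 →ₗ[ℝ] V5 →ₗ[ℝ] V5)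
    (hanti : ∀ u : V5, lb u u = 0)
    (hb1 : lb (e 0) (e 3) = r • e 1 + a • e 4)
    (hb2 : lb (e 0) (e 4) = r • e 2 - a • e 3)
    (hb3 : lb (e 3) (e 4) = s • e 0)
    (hb4 : lb (e 0) (e 1) = 0) (hb5 : lb (e 0) (e 2) = 0)
    (hb6 : lb (e 1) (e 2) = 0) (hb7 : lb (e 1) (e 3) = 0)
    (hb8 : lb (e 1) (e 4) = 0) (hb9 : lb (e 2) (e 3) = 0)
    (hb10 : lb (e 2) (e 4) = 0)
    (lbT : V5 →ₗ[ℝ] V5 →ₗ[ℝ] V5)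
    (hTanti : ∀ u : V5, lbT u u = 0)
    (hT1 : lbT (e 0) (e 3) = e 4) (hT2 : lbT (e 3) (e 4) = ε • e 0)
    (hT3 : lbT (e 4) (e 0) = e 3)
    (hT4 : lbT (e 0) (e 1) = 0) (hT5 : lbT (e 0) (e 2) = 0)
    (hT6 : lbT (e 1) (e 2) = 0) (hT7 : lbT (e 1) (e 3) = 0)
    (hT8 : lbT (e 1) (e 4) = 0) (hT9 : lbT (e 2) (e 3) = 0)
    (hT10 : lbT (e 2) (e 4) = 0) :
    ∃ φ : V5 ≃ₗ[ℝ] V5, ∀ u v : V5, φ (lb u v) = lbT (φ u) (φ v) := by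
  -- reversed brackets
  have hb1' : lb (e 3) (e 0) = -(r • e 1 + a • e 4) := by rw [anti_swap lb hanti, hb1]
  have hb2' : lb (e 4) (e 0) = -(r • e 2 - a • e 3) := by rw [anti_swap lb hanti, hb2]
  have hb3' : lb (e 4) (e 3) = -(s • e 0) := by rw [anti_swap lb hanti, hb3]
  have hb4' : lb (e 1) (e 0) = 0 := by rw [anti_swap lb hanti, hb4, neg_zero]
  have hb5' : lb (e 2) (e 0) = 0 := by rw [anti_swap lb hanti, hb5, neg_zero]
  have hb6' : lb (e 2) (e 1) = 0 := by rw [anti_swap lb hanti, hb6, neg_zero]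
  have hb7' : lb (e 3) (e 1) = 0 := by rw [anti_swap lb hanti, hb7, neg_zero]
  have hb8' : lb (e 4) (e 1) = 0 := by rw [anti_swap lb hanti, hb8, neg_zero]
  have hb9' : lb (e 3) (e 2) = 0 := by rw [anti_swap lb hanti, hb9, neg_zero]
  have hb10' : lb (e 4) (e 2) = 0 := by rw [anti_swap lb hanti, hb10, neg_zero]
  have hT1' : lbT (e 3) (e 0) = -e 4 := by rw [anti_swap lbT hTanti, hT1]
  have hT2' : lbT (e 4) (e 3) = -(ε • e 0) := by rw [anti_swap lbT hTanti, hT2]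
  have hT3' : lbT (e 0) (e 4) = -e 3 := by rw [anti_swap lbT hTanti, hT3]
  have hT4' : lbT (e 1) (e 0) = 0 := by rw [anti_swap lbT hTanti, hT4, neg_zero]
  have hT5' : lbT (e 2) (e 0) = 0 := by rw [anti_swap lbT hTanti, hT5, neg_zero]
  have hT6' : lbT (e 2) (e 1) = 0 := by rw [anti_swap lbT hTanti, hT6, neg_zero]
  have hT7' : lbT (e 3) (e 1) = 0 := by rw [anti_swap lbT hTanti, hT7, neg_zero]
  have hT8' : lbT (e 4) (e 1) = 0 := by rw [anti_swap lbT hTanti, hT8, neg_zero]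
  have hT9' : lbT (e 3) (e 2) = 0 := by rw [anti_swap lbT hTanti, hT9, neg_zero]
  have hT10' : lbT (e 4) (e 2) = 0 := by rw [anti_swap lbT hTanti, hT10, neg_zero]
  have hbd : ∀ i, lb (e i) (e i) = 0 := fun i => hanti (e i)
  have hTd : ∀ i, lbT (e i) (e i) = 0 := fun i => hTanti (e i)
  set F : Fin 5 → V5 :=
    ![a • e 0, e 1, e 2, β • e 3 + (r/a) • e 2, β • e 4 - (r/a) • e 1] with hF
  set G : Fin 5 → V5 :=
    ![a⁻¹ • e 0, e 1, e 2, β⁻¹ • e 3 - (r/(a*β)) • e 2, β⁻¹ • e 4 + (r/(a*β)) • e 1]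
    with hG
  have hFG : (lmap F).comp (lmap G) = LinearMap.id := by
    apply lin5_ext
    intro i
    fin_cases i <;>
      simp [hF, hG, lmap_e, smul_smul, smul_add, smul_sub] <;>
      match_scalars <;> (field_simp; try ring)
  have hGF : (lmap G).comp (lmap F) = LinearMap.id := by
    apply lin5_ext
    intro i
    fin_cases i <;>
      simp [hF, hG, lmap_e, smul_smul, smul_add, smul_sub] <;>
      match_scalars <;> (field_simp; try ring)
  refine ⟨LinearEquiv.ofLinear (lmap F) (lmap G) hFG hGF, ?_⟩
  apply bilin_ext
  intro i j
  fin_cases i <;> fin_cases j <;>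
    simp only [Fin.zero_eta, Fin.mk_one, Fin.reduceFinMk, LinearEquiv.ofLinear_apply, LinearEquiv.coe_coe, LinearEquiv.ofLinear_toLinearMap, LinearMap.coe_coe, hF, Fin.isValue, Matrix.cons_val_zero, Matrix.cons_val_one,
      Matrix.head_cons, Matrix.cons_val_two, Matrix.tail_cons, Matrix.cons_val_three,
      Matrix.cons_val_four, lmap_e, hb1, hb2, hb3, hb4, hb5, hb6, hb7, hb8, hb9, hb10,
      hb1', hb2', hb3', hb4', hb5', hb6', hb7', hb8', hb9', hb10', hbd,
      map_add, map_smul, map_sub, map_neg, map_zero,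
      LinearMap.add_apply, LinearMap.smul_apply, LinearMap.sub_apply,
      LinearMap.neg_apply, LinearMap.zero_apply,
      hT1, hT2, hT3, hT4, hT5, hT6, hT7, hT8, hT9, hT10,
      hT1', hT2', hT3', hT4', hT5', hT6', hT7', hT8', hT9', hT10', hTd,
      smul_zero, add_zero, zero_add, sub_zero, zero_sub, neg_zero, smul_neg, neg_neg] 
  all_goals try rfl
  all_goals match_scalars
  all_goals try ring
  all_goals try field_simp
  all_goals try linear_combination (-ε) * hβ2 - (s*a) * hε
  all_goals try linear_combination ε * hβ2 + (s*a) * hε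
  all_goals try ring

/-- for `r ≠ s`, the Lie algebra `g_{r,s}` is isomorphic to
`ℝ² × su(2)` if `s > r`, and to `ℝ² × sl(2,ℝ)` if `s < r`. -/
theorem grs_isomorphism_type
    (r s : ℝ) (hr : 0 < r) (hs : 0 < s) (hrs : r ≠ s)
    (lb : V5 →ₗ[ℝ] V5 →ₗ[ℝ] V5)
    (hanti : ∀ u : V5, lb u u = 0)
    (hjac : ∀ u v w : V5, lb u (lb v w) + lb v (lb w u) + lb w (lb u v) = 0)
    (hb1 : lb (e 0) (e 3) = r • e 1 + ((s^2 - r^2)/s) • e 4)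
    (hb2 : lb (e 0) (e 4) = r • e 2 - ((s^2 - r^2)/s) • e 3)
    (hb3 : lb (e 3) (e 4) = s • e 0)
    (hb4 : lb (e 0) (e 1) = 0) (hb5 : lb (e 0) (e 2) = 0)
    (hb6 : lb (e 1) (e 2) = 0) (hb7 : lb (e 1) (e 3) = 0)
    (hb8 : lb (e 1) (e 4) = 0) (hb9 : lb (e 2) (e 3) = 0)
    (hb10 : lb (e 2) (e 4) = 0)
    -- ℝ² × su(2) : basis {E, Z₁, Z₂, X, Y}, [E,X]=Y, [X,Y]=E, [Y,E]=X, Z's central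
    (lbsu : V5 →ₗ[ℝ] V5 →ₗ[ℝ] V5)
    (hsuanti : ∀ u : V5, lbsu u u = 0)
    (hsu1 : lbsu (e 0) (e 3) = e 4) (hsu2 : lbsu (e 3) (e 4) = e 0)
    (hsu3 : lbsu (e 4) (e 0) = e 3)
    (hsu4 : lbsu (e 0) (e 1) = 0) (hsu5 : lbsu (e 0) (e 2) = 0)
    (hsu6 : lbsu (e 1) (e 2) = 0) (hsu7 : lbsu (e 1) (e 3) = 0)
    (hsu8 : lbsu (e 1) (e 4) = 0) (hsu9 : lbsu (e 2) (e 3) = 0)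
    (hsu10 : lbsu (e 2) (e 4) = 0)
    -- ℝ² × sl(2,ℝ) : basis {E, Z₁, Z₂, X, Y}, [E,X]=Y, [X,Y]=−E, [Y,E]=X, Z's central
    (lbsl : V5 →ₗ[ℝ] V5 →ₗ[ℝ] V5)
    (hslanti : ∀ u : V5, lbsl u u = 0)
    (hsl1 : lbsl (e 0) (e 3) = e 4) (hsl2 : lbsl (e 3) (e 4) = -e 0)
    (hsl3 : lbsl (e 4) (e 0) = e 3)
    (hsl4 : lbsl (e 0) (e 1) = 0) (hsl5 : lbsl (e 0) (e 2) = 0)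
    (hsl6 : lbsl (e 1) (e 2) = 0) (hsl7 : lbsl (e 1) (e 3) = 0)
    (hsl8 : lbsl (e 1) (e 4) = 0) (hsl9 : lbsl (e 2) (e 3) = 0)
    (hsl10 : lbsl (e 2) (e 4) = 0) :
    (r < s → ∃ φ : V5 ≃ₗ[ℝ] V5, ∀ u v : V5, φ (lb u v) = lbsu (φ u) (φ v)) ∧
    (s < r → ∃ φ : V5 ≃ₗ[ℝ] V5, ∀ u v : V5, φ (lb u v) = lbsl (φ u) (φ v)) := by
  constructor
  · intro hlt
    have hsr : (0:ℝ) < s^2 - r^2 :=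
      calc (0:ℝ) < (s - r) * (s + r) :=
             mul_pos (sub_pos.mpr hlt) (by linarith)
        _ = s^2 - r^2 := by ring
    have ha : (0:ℝ) < (s^2 - r^2)/s := div_pos hsr hs
    have hprod : (0:ℝ) < s * ((s^2 - r^2)/s) := mul_pos hs ha
    refine iso_aux r s ((s^2 - r^2)/s) (Real.sqrt (s * ((s^2 - r^2)/s))) 1
      (ne_of_gt ha) (ne_of_gt (Real.sqrt_pos.mpr hprod))
      (by rw [Real.sq_sqrt hprod.le]; ring) (by norm_num)
      lb hanti hb1 hb2 hb3 hb4 hb5 hb6 hb7 hb8 hb9 hb10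
      lbsu hsuanti hsu1 (by rw [hsu2, one_smul]) hsu3
      hsu4 hsu5 hsu6 hsu7 hsu8 hsu9 hsu10
  · intro hlt
    have hsr : s^2 - r^2 < (0:ℝ) := by
      have : (0:ℝ) < (r - s) * (r + s) := mul_pos (sub_pos.mpr hlt) (by linarith)
      linarith [this, (by ring : (r - s) * (r + s) = r^2 - s^2)]
    have ha : (s^2 - r^2)/s < 0 := div_neg_of_neg_of_pos hsr hs
    have hprod : (0:ℝ) < -(s * ((s^2 - r^2)/s)) := by
      rw [neg_pos]
      exact mul_neg_of_pos_of_neg hs ha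
    refine iso_aux r s ((s^2 - r^2)/s) (Real.sqrt (-(s * ((s^2 - r^2)/s)))) (-1)
      (ne_of_lt ha) (ne_of_gt (Real.sqrt_pos.mpr hprod))
      (by rw [Real.sq_sqrt hprod.le]; ring) (by norm_num)
      lb hanti hb1 hb2 hb3 hb4 hb5 hb6 hb7 hb8 hb9 hb10
      lbsl hslanti hsl1 (by rw [hsl2, neg_one_smul]) hsl3
      hsl4 hsl5 hsl6 hsl7 hsl8 hsl9 hsl10
end

section
/- Let (g_{r,s}, ⟨·,·⟩) be the 5-dimensional metric Lie algebra with orthonormal basis {ξ, z₁, z₂, x, y} and brackets [ξ,x] = r z₁ + a₄ y, [ξ,y] = r z₂ − a₄ x, [x,y] = s ξ, r,s > 0, a₄ = (s²−r²)/s. Then every Killing-Yano tensor on (g_{r,s}, ⟨·,·⟩) is zero. In particular, (g_{r,s}, ⟨·,·⟩) admits no nonzero parallel skew-symmetric tensor. -/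
set_option maxHeartbeats 1000000

open scoped RealInnerProductSpace

lemma expand5 (v : V5) : v = v 0 • e 0 + v 1 • e 1 + v 2 • e 2 + v 3 • e 3 + v 4 • e 4 := by
  ext i
  fin_cases i <;> simp [e, EuclideanSpace.single_apply]

lemma inner_e_left (i : Fin 5) (z : V5) : ⟪e i, z⟫ = z i := by
  simp [e, EuclideanSpace.inner_single_left]

lemma inner_e_right (i : Fin 5) (z : V5) : ⟪z, e i⟫ = z i := by
  simp [e, EuclideanSpace.inner_single_right]

/-- on the metric Lie algebra `g_{r,s}`, every Killing-Yano tensor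
is zero; in particular there is no nonzero parallel skew-symmetric tensor. -/
theorem grs_no_nonzero_KY
    (r s : ℝ) (hr : 0 < r) (hs : 0 < s)
    (lb : V5 →ₗ[ℝ] V5 →ₗ[ℝ] V5)
    (hanti : ∀ u : V5, lb u u = 0)
    (hjac : ∀ u v w : V5, lb u (lb v w) + lb v (lb w u) + lb w (lb u v) = 0)
    (hb1 : lb (e 0) (e 3) = r • e 1 + ((s^2 - r^2)/s) • e 4)
    (hb2 : lb (e 0) (e 4) = r • e 2 - ((s^2 - r^2)/s) • e 3)
    (hb3 : lb (e 3) (e 4) = s • e 0)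
    (hb4 : lb (e 0) (e 1) = 0) (hb5 : lb (e 0) (e 2) = 0)
    (hb6 : lb (e 1) (e 2) = 0) (hb7 : lb (e 1) (e 3) = 0)
    (hb8 : lb (e 1) (e 4) = 0) (hb9 : lb (e 2) (e 3) = 0)
    (hb10 : lb (e 2) (e 4) = 0)
    (D : V5 →ₗ[ℝ] V5 →ₗ[ℝ] V5)
    (hD : ∀ u v w : V5, 2 * ⟪D u v, w⟫ = ⟪lb u v, w⟫ - ⟪lb v w, u⟫ + ⟪lb w u, v⟫) :
    (∀ T : V5 →ₗ[ℝ] V5, (∀ u v : V5, ⟪T u, v⟫ = -⟪u, T v⟫) →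
      (∀ u v w : V5, ⟪D u (T v) - T (D u v), w⟫ + ⟪D v (T u) - T (D v u), w⟫ = 0) →
      T = 0) ∧
    (∀ T : V5 →ₗ[ℝ] V5, (∀ u v : V5, ⟪T u, v⟫ = -⟪u, T v⟫) →
      (∀ u v : V5, D u (T v) - T (D u v) = 0) → T = 0) := by
  have hneg : ∀ u v : V5, lb v u = -lb u v := by
    intro u v
    have h := hanti (u + v)
    simp only [map_add, LinearMap.add_apply, hanti u, hanti v, add_zero, zero_add] at h
    linear_combination (norm := abel) h
  have hb1' : lb (e 3) (e 0) = -(r • e 1 + ((s^2 - r^2)/s) • e 4) := by rw [hneg, hb1]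
  have hb2' : lb (e 4) (e 0) = -(r • e 2 - ((s^2 - r^2)/s) • e 3) := by rw [hneg, hb2]
  have hb3' : lb (e 4) (e 3) = -(s • e 0) := by rw [hneg, hb3]
  have hb4' : lb (e 1) (e 0) = 0 := by rw [hneg, hb4, neg_zero]
  have hb5' : lb (e 2) (e 0) = 0 := by rw [hneg, hb5, neg_zero]
  have hb6' : lb (e 2) (e 1) = 0 := by rw [hneg, hb6, neg_zero]
  have hb7' : lb (e 3) (e 1) = 0 := by rw [hneg, hb7, neg_zero]
  have hb8' : lb (e 4) (e 1) = 0 := by rw [hneg, hb8, neg_zero]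
  have hb9' : lb (e 3) (e 2) = 0 := by rw [hneg, hb9, neg_zero]
  have hb10' : lb (e 4) (e 2) = 0 := by rw [hneg, hb10, neg_zero]
  have h00 : lb (e 0) (e 0) = 0 := hanti _
  have h11 : lb (e 1) (e 1) = 0 := hanti _
  have h22 : lb (e 2) (e 2) = 0 := hanti _
  have h33 : lb (e 3) (e 3) = 0 := hanti _
  have h44 : lb (e 4) (e 4) = 0 := hanti _
  have lbvw : ∀ v w : V5, lb v w =
      ((v 0 * w 3 - v 3 * w 0) • (r • e 1 + ((s^2 - r^2)/s) • e 4)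
       + (v 0 * w 4 - v 4 * w 0) • (r • e 2 - ((s^2 - r^2)/s) • e 3)
       + (v 3 * w 4 - v 4 * w 3) • (s • e 0)) := by
    intro v w
    conv_lhs => rw [expand5 v, expand5 w]
    simp only [map_add, map_smul, LinearMap.add_apply, LinearMap.smul_apply,
      hb1, hb2, hb3, hb4, hb5, hb6, hb7, hb8, hb9, hb10,
      hb1', hb2', hb3', hb4', hb5', hb6', hb7', hb8', hb9', hb10',
      h00, h11, h22, h33, h44, smul_zero, add_zero, zero_add]
    module
  have ilb : ∀ v w z : V5, ⟪lb v w, z⟫ =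
      (v 0 * w 3 - v 3 * w 0) * (r * z 1 + ((s^2 - r^2)/s) * z 4)
      + (v 0 * w 4 - v 4 * w 0) * (r * z 2 - ((s^2 - r^2)/s) * z 3)
      + (v 3 * w 4 - v 4 * w 3) * (s * z 0) := by
    intro v w z
    rw [lbvw v w]
    simp only [inner_add_left, real_inner_smul_left, inner_sub_left, inner_e_left]
  have hD' : ∀ u v w : V5, ⟪D u v, w⟫ = (⟪lb u v, w⟫ - ⟪lb v w, u⟫ + ⟪lb w u, v⟫) / 2 := by
    intro u v w
    have := hD u v w
    linarith
  have main : ∀ T : V5 →ₗ[ℝ] V5, (∀ u v : V5, ⟪T u, v⟫ = -⟪u, T v⟫) →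
      (∀ u v w : V5, ⟪D u (T v) - T (D u v), w⟫ + ⟪D v (T u) - T (D v u), w⟫ = 0) →
      T = 0 := by
    intro T hsk hKY
    have hTc : ∀ i j : Fin 5, (T (e i)) j = -((T (e j)) i) := by
      intro i j
      have h := hsk (e i) (e j)
      rwa [inner_e_right, inner_e_left] at h
    have key : ∀ j k : Fin 5, ⟪D (e 0) (T (e j)), e k⟫ + ⟪D (e 0) (e j), T (e k)⟫
        + ⟪D (e j) (T (e 0)), e k⟫ + ⟪D (e j) (e 0), T (e k)⟫ = 0 := by
      intro j k
      have h := hKY (e 0) (e j) (e k)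
      rw [inner_sub_left, inner_sub_left,
        hsk (D (e 0) (e j)) (e k), hsk (D (e j) (e 0)) (e k)] at h
      linarith
    have E1 := key 0 1
    have E2 := key 0 2
    have E3 := key 0 3
    have E4 := key 0 4
    have E11 := key 1 1
    have E22 := key 2 2
    have E33 := key 3 3
    have E43 := key 4 3
    have E34 := key 3 4
    have E14 := key 1 4
    have ecoord : ∀ i j : Fin 5, e i j = if j = i then 1 else 0 := by
      intro i j; simp [e, EuclideanSpace.single_apply]
    simp only [hD', ilb, inner_e_right, ecoord] at E1 E2 E3 E4 E11 E22 E33 E43 E34 E14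
    simp only [Fin.reduceEq, reduceIte] at E1 E2 E3 E4 E11 E22 E33 E43 E34 E14
    ring_nf at E1 E2 E3 E4 E11 E22 E33 E43 E34 E14
    have hrne : r ≠ 0 := hr.ne'
    have hsne : s ≠ 0 := hs.ne'
    have d : ∀ i : Fin 5, T (e i) i = 0 := by
      intro i; have := hTc i i; linarith
    have cr : ∀ x : ℝ, r * x = 0 → x = 0 := fun x h =>
      (mul_eq_zero.mp h).resolve_left hrne
    have cs : ∀ x : ℝ, s * x = 0 → x = 0 := fun x h =>
      (mul_eq_zero.mp h).resolve_left hsne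
    -- canonical entries
    have z03 : T (e 0) 3 = 0 := by
      rcases mul_eq_zero.mp E1 with h | h
      · exact h
      · exact absurd h hrne
    have z04 : T (e 0) 4 = 0 := cr _ E2
    have z01 : T (e 0) 1 = 0 := by
      rw [z04] at E3; field_simp [hrne] at E3; exact cr _ (cs _ (by linear_combination -E3))
    have z02 : T (e 0) 2 = 0 := by
      rw [z03] at E4; field_simp [hrne] at E4; exact cr _ (cs _ (by linear_combination -E4))
    have z13 : T (e 1) 3 = 0 := by
      field_simp [hrne] at E11; exact cr _ (by linear_combination -E11)
    have z24 : T (e 2) 4 = 0 := by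
      field_simp [hrne] at E22; exact cr _ (by linear_combination -E22)
    have z31 : T (e 3) 1 = 0 := by rw [hTc 3 1, z13, neg_zero]
    have z34 : T (e 3) 4 = 0 := by
      rw [z31] at E33; field_simp [hsne] at E33; exact cs _ (by linear_combination -E33)
    have z14 : T (e 1) 4 = 0 := by
      rw [hTc 1 4]
      rw [d 0, d 3, d 4] at E43
      field_simp [hrne] at E43
      rw [cr (T (e 4) 1) (cs _ (by linear_combination -E43)), neg_zero]
    have z23 : T (e 2) 3 = 0 := by
      rw [hTc 2 3]
      rw [d 0, d 3, d 4] at E34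
      field_simp [hrne] at E34
      rw [cr (T (e 3) 2) (cs _ (by linear_combination -E34)), neg_zero]
    have z12 : T (e 1) 2 = 0 := by
      rw [hTc 4 3, z34, neg_zero] at E14
      rw [z13] at E14
      field_simp [hrne] at E14; exact cr _ (cs _ (by linear_combination -E14))
    have z : ∀ i : Fin 5, T (e i) = 0 := by
      intro i
      ext m
      have h10 : T (e 1) 0 = 0 := by rw [hTc 1 0, z01, neg_zero]
      have h20 : T (e 2) 0 = 0 := by rw [hTc 2 0, z02, neg_zero]
      have h30 : T (e 3) 0 = 0 := by rw [hTc 3 0, z03, neg_zero]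
      have h40 : T (e 4) 0 = 0 := by rw [hTc 4 0, z04, neg_zero]
      have h21 : T (e 2) 1 = 0 := by rw [hTc 2 1, z12, neg_zero]
      have h41 : T (e 4) 1 = 0 := by rw [hTc 4 1, z14, neg_zero]
      have h32 : T (e 3) 2 = 0 := by rw [hTc 3 2, z23, neg_zero]
      have h42 : T (e 4) 2 = 0 := by rw [hTc 4 2, z24, neg_zero]
      have h43 : T (e 4) 3 = 0 := by rw [hTc 4 3, z34, neg_zero]
      have hz : (0 : V5) m = 0 := rfl
      fin_cases i <;> fin_cases m <;>
        simp only [hz] <;>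
        first
          | exact d _
          | assumption
    apply LinearMap.ext
    intro v
    rw [expand5 v]
    simp only [map_add, map_smul, z, smul_zero, add_zero, LinearMap.zero_apply]
  refine ⟨main, ?_⟩
  intro T hsk hpar
  apply main T hsk
  intro u v w
  rw [hpar u v, hpar v u]
  simp
end

section
/- Let h = ℝ × e(2) be the 4-dimensional Lie algebra with basis {e₁, f₁, e₂, f₂} and brackets [e₁,e₂] = −f₂, [e₁,f₂] = e₂, with inner product t·Id (t > 0) in this basis. Let S be the skew-symmetric endomorphism Se₁ = a₁ f₁, Se₂ = a₂ f₂ (a₁, a₂ ≠ 0). Then the central extension g = h ⊕_μ ℝξ with μ(x,y) = −2⟨S⁻¹x, y⟩, i.e., with brackets [e₁,e₂] = −f₂, [e₁,f₂] = e₂, [e₁,f₁] = 2t a₁⁻¹ ξ, [e₂,f₂] = 2t a₂⁻¹ ξ, and inner product extending ⟨·,·⟩_t with ‖ξ‖ = 1, ξ ⊥ h, admits the strict CKY tensor T with T|_h = S, Tξ = 0; in particular T satisfies the CKY equation with θ the dual of ξ. -/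
open scoped RealInnerProductSpace

set_option maxHeartbeats 4000000 in
/-- the central extension `g = (ℝ × e(2)) ⊕_μ ℝξ` (Example: basis
`{e₁, f₁, e₂, f₂, ξ} = {b 0, b 1, b 2, b 3, b 4}`, metric `diag(t,t,t,t,1)`,
brackets `[e₁,e₂] = −f₂`, `[e₁,f₂] = e₂`, `[e₁,f₁] = 2t a₁⁻¹ ξ`,
`[e₂,f₂] = 2t a₂⁻¹ ξ`) carries the strict CKY tensor `T` with `T e₁ = a₁ f₁`,
`T e₂ = a₂ f₂` (hence `T f₁ = −a₁ e₁`, `T f₂ = −a₂ e₂`), `T ξ = 0`, and 1-form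
`θ = ⟪ξ, ·⟫`; moreover the brackets satisfy the Jacobi identity. -/
theorem central_extension_R_e2_strict_cky
    {V : Type*} [NormedAddCommGroup V] [InnerProductSpace ℝ V] [FiniteDimensional ℝ V]
    (t a₁ a₂ : ℝ) (ht : 0 < t) (ha₁ : a₁ ≠ 0) (ha₂ : a₂ ≠ 0)
    (b : Module.Basis (Fin 5) ℝ V)
    (hmetric : ∀ i j : Fin 5,
      ⟪b i, b j⟫ = if i = j then (if i = 4 then 1 else t) else 0)
    (lb : V →ₗ[ℝ] V →ₗ[ℝ] V)
    (hanti : ∀ u : V, lb u u = 0)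
    (hb1 : lb (b 0) (b 2) = -(b 3))
    (hb2 : lb (b 0) (b 3) = b 2)
    (hb3 : lb (b 0) (b 1) = (2*t/a₁) • b 4)
    (hb4 : lb (b 2) (b 3) = (2*t/a₂) • b 4)
    (hb5 : lb (b 1) (b 2) = 0) (hb6 : lb (b 1) (b 3) = 0)
    (hb7 : lb (b 0) (b 4) = 0) (hb8 : lb (b 1) (b 4) = 0)
    (hb9 : lb (b 2) (b 4) = 0) (hb10 : lb (b 3) (b 4) = 0)
    (D : V →ₗ[ℝ] V →ₗ[ℝ] V)
    (hD : ∀ u v w : V, 2 * ⟪D u v, w⟫ = ⟪lb u v, w⟫ - ⟪lb v w, u⟫ + ⟪lb w u, v⟫)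
    (T : V →ₗ[ℝ] V)
    (hT0 : T (b 0) = a₁ • b 1) (hT1 : T (b 1) = -a₁ • b 0)
    (hT2 : T (b 2) = a₂ • b 3) (hT3 : T (b 3) = -a₂ • b 2)
    (hT4 : T (b 4) = 0) :
    (∀ u v w : V, lb u (lb v w) + lb v (lb w u) + lb w (lb u v) = 0) ∧
    (∀ u v : V, ⟪T u, v⟫ = -⟪u, T v⟫) ∧
    (b 4 : V) ≠ 0 ∧
    (∀ u v w : V,
      ⟪D u (T v) - T (D u v), w⟫ + ⟪D v (T u) - T (D v u), w⟫
        = 2 * ⟪u, v⟫ * ⟪b 4, w⟫ - ⟪v, w⟫ * ⟪b 4, u⟫ - ⟪u, w⟫ * ⟪b 4, v⟫) := by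
  -- antisymmetry of the bracket
  have hskew : ∀ u v : V, lb v u = -lb u v := by
    intro u v
    have h : lb v u + lb u v = 0 := by
      have h2 := hanti (u + v)
      simp only [map_add, LinearMap.add_apply, hanti, zero_add, add_zero] at h2
      exact h2
    exact eq_neg_of_add_eq_zero_left h
  -- the reversed bracket table
  have hr1 : lb (b 2) (b 0) = b 3 := by rw [hskew, hb1, neg_neg]
  have hr2 : lb (b 3) (b 0) = -(b 2) := by rw [hskew, hb2]
  have hr3 : lb (b 1) (b 0) = -((2*t/a₁) • b 4) := by rw [hskew, hb3]
  have hr4 : lb (b 3) (b 2) = -((2*t/a₂) • b 4) := by rw [hskew, hb4]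
  have hr5 : lb (b 2) (b 1) = 0 := by rw [hskew, hb5, neg_zero]
  have hr6 : lb (b 3) (b 1) = 0 := by rw [hskew, hb6, neg_zero]
  have hr7 : lb (b 4) (b 0) = 0 := by rw [hskew, hb7, neg_zero]
  have hr8 : lb (b 4) (b 1) = 0 := by rw [hskew, hb8, neg_zero]
  have hr9 : lb (b 4) (b 2) = 0 := by rw [hskew, hb9, neg_zero]
  have hr10 : lb (b 4) (b 3) = 0 := by rw [hskew, hb10, neg_zero]
  -- skew-symmetry of T
  have hTskew : ∀ u v : V, ⟪T u, v⟫ = -⟪u, T v⟫ := by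
    intro u v
    rw [← b.sum_repr u, ← b.sum_repr v]
    simp only [Fin.sum_univ_five, map_add, map_smul, hT0, hT1, hT2, hT3, hT4]
    simp only [inner_add_left, inner_add_right, real_inner_smul_left, real_inner_smul_right,
      hmetric, smul_smul, smul_zero, inner_zero_left, inner_zero_right, smul_eq_mul,
      Fin.reduceEq, reduceIte]
    ring
  refine ⟨?_, hTskew, b.ne_zero 4, ?_⟩
  · -- Jacobi identity
    intro u v w
    rw [← b.sum_repr u, ← b.sum_repr v, ← b.sum_repr w]
    simp only [Fin.sum_univ_five, map_add, map_smul, map_neg, map_zero,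
      LinearMap.add_apply, LinearMap.smul_apply, LinearMap.neg_apply, LinearMap.zero_apply,
      hanti, hb1, hb2, hb3, hb4, hb5, hb6, hb7, hb8, hb9, hb10,
      hr1, hr2, hr3, hr4, hr5, hr6, hr7, hr8, hr9, hr10,
      smul_zero, smul_neg, neg_smul, smul_smul]
    module
  · -- the strict CKY equation
    have hD' : ∀ u v w : V, ⟪D u v, w⟫ = (⟪lb u v, w⟫ - ⟪lb v w, u⟫ + ⟪lb w u, v⟫)/2 := by
      intro u v w; linarith [hD u v w]
    intro u v w
    simp only [inner_sub_left, hTskew, hD']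
    rw [← b.sum_repr u, ← b.sum_repr v, ← b.sum_repr w]
    simp only [Fin.sum_univ_five, map_add, map_smul, map_neg, map_zero,
      LinearMap.add_apply, LinearMap.smul_apply, LinearMap.neg_apply, LinearMap.zero_apply,
      hT0, hT1, hT2, hT3, hT4,
      hanti, hb1, hb2, hb3, hb4, hb5, hb6, hb7, hb8, hb9, hb10,
      hr1, hr2, hr3, hr4, hr5, hr6, hr7, hr8, hr9, hr10,
      smul_zero, smul_neg, neg_smul, smul_smul,
      inner_add_left, inner_add_right, real_inner_smul_left, real_inner_smul_right,
      inner_neg_left, inner_neg_right, inner_zero_left, inner_zero_right,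
      hmetric, Fin.reduceEq, reduceIte, smul_eq_mul]
    field_simp
    ring
end

section
/- Let (L_{5,9}, ⟨·,·⟩_r) be the Lie algebra with basis {E, Z₁, Z₂, X, Y}, brackets [X,E] = Z₁, [Y,E] = Z₂, [X,Y] = E, and the inner product making the basis orthogonal with ‖E‖² = r², ‖Z₁‖² = ‖Z₂‖² = r⁴, ‖X‖² = ‖Y‖² = 1 (r > 0). If (L_{5,9}, ⟨·,·⟩_r) is isometrically isomorphic to (L_{5,9}, ⟨·,·⟩_{r'}), then r = r'. -/
/-- the inner product `⟨·,·⟩_r` on `L_{5,9}`: the basis `{E, Z₁, Z₂, X, Y}` is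
orthogonal with `‖E‖² = r²`, `‖Z₁‖² = ‖Z₂‖² = r⁴`, `‖X‖² = ‖Y‖² = 1`. -/
noncomputable def Bmet (r : ℝ) (u v : V5) : ℝ :=
  r^2 * u 0 * v 0 + r^4 * u 1 * v 1 + r^4 * u 2 * v 2 + u 3 * v 3 + u 4 * v 4

set_option maxHeartbeats 1000000 in
/-- if `(L_{5,9}, ⟨·,·⟩_r)` and `(L_{5,9}, ⟨·,·⟩_{r'})` are
isometrically isomorphic, then `r = r'`. -/
theorem L59_metrics_pairwise_nonisometric
    (r r' : ℝ) (hr : 0 < r) (hr' : 0 < r')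
    (lb : V5 →ₗ[ℝ] V5 →ₗ[ℝ] V5)
    (hanti : ∀ u : V5, lb u u = 0)
    (hb1 : lb (e 3) (e 0) = e 1) (hb2 : lb (e 4) (e 0) = e 2)
    (hb3 : lb (e 3) (e 4) = e 0)
    (hb4 : lb (e 0) (e 1) = 0) (hb5 : lb (e 0) (e 2) = 0)
    (hb6 : lb (e 1) (e 2) = 0) (hb7 : lb (e 1) (e 3) = 0)
    (hb8 : lb (e 1) (e 4) = 0) (hb9 : lb (e 2) (e 3) = 0)
    (hb10 : lb (e 2) (e 4) = 0)
    (φ : V5 ≃ₗ[ℝ] V5)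
    (hφbr : ∀ u v : V5, φ (lb u v) = lb (φ u) (φ v))
    (hφiso : ∀ u v : V5, Bmet r' (φ u) (φ v) = Bmet r u v) :
    r = r' := by
  -- skew-symmetry of the bracket
  have hskew : ∀ u v : V5, lb v u = - lb u v := by
    intro u v
    have h := hanti (u + v)
    simp only [map_add, LinearMap.add_apply, hanti u, hanti v, zero_add, add_zero] at h
    exact eq_neg_of_add_eq_zero_left h
  -- decomposition in the basis
  have hdecomp : ∀ u : V5, u = ∑ i : Fin 5, u i • e i := by
    intro u
    ext j
    rw [Fin.sum_univ_five]
    fin_cases j <;> simp [e, EuclideanSpace.single_apply]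
  -- explicit formula for the bracket
  have hformula : ∀ u v : V5, lb u v =
      (u 3 * v 4 - u 4 * v 3) • e 0 + (u 3 * v 0 - u 0 * v 3) • e 1
        + (u 4 * v 0 - u 0 * v 4) • e 2 := by
    intro u v
    conv_lhs => rw [hdecomp u, hdecomp v]
    simp only [map_add, map_sum, map_smul, LinearMap.sum_apply, LinearMap.add_apply,
      LinearMap.smul_apply,
      Fin.sum_univ_five, hanti, hb1, hb2, hb3, hb4, hb5, hb6, hb7, hb8, hb9, hb10,
      hskew (e 3) (e 0), hskew (e 4) (e 0), hskew (e 3) (e 4), hskew (e 0) (e 1),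
      hskew (e 0) (e 2), hskew (e 1) (e 2), hskew (e 1) (e 3), hskew (e 1) (e 4),
      hskew (e 2) (e 3), hskew (e 2) (e 4)]
    module
  set P := φ (e 3) with hPdef
  set Q := φ (e 4) with hQdef
  -- image of E
  have hE0 : φ (e 0) = (P 3 * Q 4 - P 4 * Q 3) • e 0 + (P 3 * Q 0 - P 0 * Q 3) • e 1
      + (P 4 * Q 0 - P 0 * Q 4) • e 2 := by
    conv_lhs => rw [← hb3]
    rw [hφbr, hformula]
  have h00 : (φ (e 0)) 0 = P 3 * Q 4 - P 4 * Q 3 := by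
    rw [hE0]; simp [e, EuclideanSpace.single_apply]
  have h03 : (φ (e 0)) 3 = 0 := by
    rw [hE0]; simp [e, EuclideanSpace.single_apply]
  have h04 : (φ (e 0)) 4 = 0 := by
    rw [hE0]; simp [e, EuclideanSpace.single_apply]
  -- images of Z₁, Z₂
  have hE1 : φ (e 1) = ((P 3 * Q 4 - P 4 * Q 3) * P 3) • e 1
      + ((P 3 * Q 4 - P 4 * Q 3) * P 4) • e 2 := by
    conv_lhs => rw [← hb1]
    rw [hφbr, hformula, h00, h03, h04]
    module
  have hE2 : φ (e 2) = ((P 3 * Q 4 - P 4 * Q 3) * Q 3) • e 1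
      + ((P 3 * Q 4 - P 4 * Q 3) * Q 4) • e 2 := by
    conv_lhs => rw [← hb2]
    rw [hφbr, hformula, h00, h03, h04]
    module
  -- scalar isometry equations
  have A33 : r'^2 * P 0 * P 0 + r'^4 * P 1 * P 1 + r'^4 * P 2 * P 2
      + P 3 * P 3 + P 4 * P 4 = 1 := by
    have h := hφiso (e 3) (e 3)
    simp only [Bmet] at h
    simp [e, EuclideanSpace.single_apply] at h
    linear_combination h
  have A44 : r'^2 * Q 0 * Q 0 + r'^4 * Q 1 * Q 1 + r'^4 * Q 2 * Q 2
      + Q 3 * Q 3 + Q 4 * Q 4 = 1 := by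
    have h := hφiso (e 4) (e 4)
    simp only [Bmet] at h
    simp [e, EuclideanSpace.single_apply] at h
    linear_combination h
  have A34 : r'^2 * P 0 * Q 0 + r'^4 * P 1 * Q 1 + r'^4 * P 2 * Q 2
      + P 3 * Q 3 + P 4 * Q 4 = 0 := by
    have h := hφiso (e 3) (e 4)
    simp only [Bmet] at h
    simp [e, EuclideanSpace.single_apply] at h
    linear_combination h
  have A30 : r'^2 * P 0 * (P 3 * Q 4 - P 4 * Q 3) + r'^4 * P 1 * (P 3 * Q 0 - P 0 * Q 3)
      + r'^4 * P 2 * (P 4 * Q 0 - P 0 * Q 4) = 0 := by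
    have h := hφiso (e 3) (e 0)
    rw [hE0] at h
    simp only [Bmet] at h
    simp [e, EuclideanSpace.single_apply] at h
    linear_combination h
  have A40 : r'^2 * Q 0 * (P 3 * Q 4 - P 4 * Q 3) + r'^4 * Q 1 * (P 3 * Q 0 - P 0 * Q 3)
      + r'^4 * Q 2 * (P 4 * Q 0 - P 0 * Q 4) = 0 := by
    have h := hφiso (e 4) (e 0)
    rw [hE0] at h
    simp only [Bmet] at h
    simp [e, EuclideanSpace.single_apply] at h
    linear_combination h
  have A31 : r'^4 * ((P 3 * Q 4 - P 4 * Q 3) * (P 1 * P 3 + P 2 * P 4)) = 0 := by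
    have h := hφiso (e 3) (e 1)
    rw [hE1] at h
    simp only [Bmet] at h
    simp [e, EuclideanSpace.single_apply] at h
    linear_combination h
  have A32 : r'^4 * ((P 3 * Q 4 - P 4 * Q 3) * (P 1 * Q 3 + P 2 * Q 4)) = 0 := by
    have h := hφiso (e 3) (e 2)
    rw [hE2] at h
    simp only [Bmet] at h
    simp [e, EuclideanSpace.single_apply] at h
    linear_combination h
  have A41 : r'^4 * ((P 3 * Q 4 - P 4 * Q 3) * (Q 1 * P 3 + Q 2 * P 4)) = 0 := by
    have h := hφiso (e 4) (e 1)
    rw [hE1] at h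
    simp only [Bmet] at h
    simp [e, EuclideanSpace.single_apply] at h
    linear_combination h
  have A42 : r'^4 * ((P 3 * Q 4 - P 4 * Q 3) * (Q 1 * Q 3 + Q 2 * Q 4)) = 0 := by
    have h := hφiso (e 4) (e 2)
    rw [hE2] at h
    simp only [Bmet] at h
    simp [e, EuclideanSpace.single_apply] at h
    linear_combination h
  have A01 : r'^4 * ((P 3 * Q 4 - P 4 * Q 3) *
      ((P 3 * Q 0 - P 0 * Q 3) * P 3 + (P 4 * Q 0 - P 0 * Q 4) * P 4)) = 0 := by
    have h := hφiso (e 0) (e 1)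
    rw [hE0, hE1] at h
    simp only [Bmet] at h
    simp [e, EuclideanSpace.single_apply] at h
    linear_combination h
  have A02 : r'^4 * ((P 3 * Q 4 - P 4 * Q 3) *
      ((P 3 * Q 0 - P 0 * Q 3) * Q 3 + (P 4 * Q 0 - P 0 * Q 4) * Q 4)) = 0 := by
    have h := hφiso (e 0) (e 2)
    rw [hE0, hE2] at h
    simp only [Bmet] at h
    simp [e, EuclideanSpace.single_apply] at h
    linear_combination h
  have A00 : r'^2 * (P 3 * Q 4 - P 4 * Q 3)^2
      + r'^4 * ((P 3 * Q 0 - P 0 * Q 3)^2 + (P 4 * Q 0 - P 0 * Q 4)^2) = r^2 := by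
    have h := hφiso (e 0) (e 0)
    rw [hE0] at h
    simp only [Bmet] at h
    simp [e, EuclideanSpace.single_apply] at h
    linear_combination h
  have A11 : r'^4 * ((P 3 * Q 4 - P 4 * Q 3)^2 * (P 3 * P 3 + P 4 * P 4)) = r^4 := by
    have h := hφiso (e 1) (e 1)
    rw [hE1] at h
    simp only [Bmet] at h
    simp [e, EuclideanSpace.single_apply] at h
    linear_combination h
  -- the determinant is nonzero
  have ht : P 3 * Q 4 - P 4 * Q 3 ≠ 0 := by
    intro h0
    rw [h0] at A11
    nlinarith [pow_pos hr 4]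
  have cancel : ∀ s : ℝ, r'^4 * ((P 3 * Q 4 - P 4 * Q 3) * s) = 0 → s = 0 := by
    intro s hs
    have h1 : (P 3 * Q 4 - P 4 * Q 3) * s = 0 := by
      rcases mul_eq_zero.mp hs with h | h
      · exact absurd h (by positivity)
      · exact h
    exact (mul_eq_zero.mp h1).resolve_left ht
  have s31 := cancel _ A31
  have s32 := cancel _ A32
  have s41 := cancel _ A41
  have s42 := cancel _ A42
  have s01 := cancel _ A01
  have s02 := cancel _ A02
  have hP1 : P 1 = 0 := by
    have h1 : (P 3 * Q 4 - P 4 * Q 3) * P 1 = 0 := by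
      linear_combination Q 4 * s31 - P 4 * s32
    exact (mul_eq_zero.mp h1).resolve_left ht
  have hP2 : P 2 = 0 := by
    have h1 : (P 3 * Q 4 - P 4 * Q 3) * P 2 = 0 := by
      linear_combination P 3 * s32 - Q 3 * s31
    exact (mul_eq_zero.mp h1).resolve_left ht
  have hQ1 : Q 1 = 0 := by
    have h1 : (P 3 * Q 4 - P 4 * Q 3) * Q 1 = 0 := by
      linear_combination Q 4 * s41 - P 4 * s42
    exact (mul_eq_zero.mp h1).resolve_left ht
  have hQ2 : Q 2 = 0 := by
    have h1 : (P 3 * Q 4 - P 4 * Q 3) * Q 2 = 0 := by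
      linear_combination P 3 * s42 - Q 3 * s41
    exact (mul_eq_zero.mp h1).resolve_left ht
  have hz1 : P 3 * Q 0 - P 0 * Q 3 = 0 := by
    have h1 : (P 3 * Q 4 - P 4 * Q 3) * (P 3 * Q 0 - P 0 * Q 3) = 0 := by
      linear_combination Q 4 * s01 - P 4 * s02
    exact (mul_eq_zero.mp h1).resolve_left ht
  have hz2 : P 4 * Q 0 - P 0 * Q 4 = 0 := by
    have h1 : (P 3 * Q 4 - P 4 * Q 3) * (P 4 * Q 0 - P 0 * Q 4) = 0 := by
      linear_combination P 3 * s02 - Q 3 * s01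
    exact (mul_eq_zero.mp h1).resolve_left ht
  have hP0 : P 0 = 0 := by
    have h2 : r'^2 * ((P 3 * Q 4 - P 4 * Q 3) * P 0) = 0 := by
      linear_combination A30 - r'^4 * P 1 * hz1 - r'^4 * P 2 * hz2
    have h1 : (P 3 * Q 4 - P 4 * Q 3) * P 0 = 0 := by
      rcases mul_eq_zero.mp h2 with h | h
      · exact absurd h (by positivity)
      · exact h
    exact (mul_eq_zero.mp h1).resolve_left ht
  have hQ0 : Q 0 = 0 := by
    have h2 : r'^2 * ((P 3 * Q 4 - P 4 * Q 3) * Q 0) = 0 := by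
      linear_combination A40 - r'^4 * Q 1 * hz1 - r'^4 * Q 2 * hz2
    have h1 : (P 3 * Q 4 - P 4 * Q 3) * Q 0 = 0 := by
      rcases mul_eq_zero.mp h2 with h | h
      · exact absurd h (by positivity)
      · exact h
    exact (mul_eq_zero.mp h1).resolve_left ht
  have n1 : P 3 * P 3 + P 4 * P 4 = 1 := by
    linear_combination A33 - r'^2 * P 0 * hP0 - r'^4 * P 1 * hP1 - r'^4 * P 2 * hP2
  have n2 : Q 3 * Q 3 + Q 4 * Q 4 = 1 := by
    linear_combination A44 - r'^2 * Q 0 * hQ0 - r'^4 * Q 1 * hQ1 - r'^4 * Q 2 * hQ2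
  have n3 : P 3 * Q 3 + P 4 * Q 4 = 0 := by
    linear_combination A34 - r'^2 * Q 0 * hP0 - r'^4 * Q 1 * hP1 - r'^4 * Q 2 * hP2
  have ht2 : (P 3 * Q 4 - P 4 * Q 3)^2 = 1 := by
    linear_combination (Q 3 * Q 3 + Q 4 * Q 4) * n1 + n2 - (P 3 * Q 3 + P 4 * Q 4) * n3
  have hsq : r^2 = r'^2 := by
    linear_combination -A00 + r'^4 * (P 3 * Q 0 - P 0 * Q 3) * hz1
      + r'^4 * (P 4 * Q 0 - P 0 * Q 4) * hz2 + r'^2 * ht2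
  have h5 : (r - r') * (r + r') = 0 := by linear_combination hsq
  rcases mul_eq_zero.mp h5 with h | h
  · linarith
  · linarith
end
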